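/- arXiv:1707.08393 — 7 statements merged into one kernel-verified Lean document; each statement's English description precedes it below -/
import Mathlib

section
/- The probability measure G_N is invariant under the transformation T_N: for every Borel set A ⊆ I one has G_N(T_N^{-1}(A)) = G_N(A). -/
open MeasureTheory Set Filter
open scoped Classical Topology ENNReal

/-- The N-continued fraction transformation `T_N x = N/x - ⌊N/x⌋` (with `T_N 0 = 0`). -/
noncomputable def TN (N : ℕ) (x : ℝ) : ℝ := (N : ℝ) / x - ⌊(N : ℝ) / x⌋

/-- The invariant (Gauss-type) measure `G_N(A) = (1/log((N+1)/N)) ∫_A dx/(x+N)` on `I = [0,1]`. -/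
noncomputable def GN (N : ℕ) : Measure ℝ :=
  (volume.restrict (Icc (0:ℝ) 1)).withDensity
    (fun x => ENNReal.ofReal ((Real.log ((N+1)/N))⁻¹ * (x + N)⁻¹))

noncomputable def cN (N : ℕ) : ℝ := (Real.log ((N+1)/N))⁻¹

lemma TN_eq_fract (N : ℕ) (x : ℝ) : TN N x = Int.fract ((N:ℝ)/x) := rfl

lemma measurable_TN (N : ℕ) : Measurable (TN N) := by
  have : Measurable fun x : ℝ => (N:ℝ)/x := measurable_const.div measurable_id
  exact measurable_fract.comp this

lemma log_pos_N (N : ℕ) (hN : 1 ≤ N) : 0 < Real.log (((N:ℝ)+1)/N) := by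
  have h0 : (0:ℝ) < N := by exact_mod_cast hN
  apply Real.log_pos
  rw [lt_div_iff₀ h0]
  linarith

lemma cN_nonneg (N : ℕ) (hN : 1 ≤ N) : 0 ≤ cN N :=
  le_of_lt (inv_pos.mpr (log_pos_N N hN))

lemma GN_apply (N : ℕ) {s : Set ℝ} (hs : MeasurableSet s) :
    GN N s = ∫⁻ x in s ∩ Icc (0:ℝ) 1, ENNReal.ofReal (cN N * (x + N)⁻¹) := by
  rw [GN, withDensity_apply _ hs, Measure.restrict_restrict hs]
  rfl

lemma GN_inter_Icc (N : ℕ) {s : Set ℝ} (hs : MeasurableSet s) :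
    GN N s = GN N (s ∩ Icc (0:ℝ) 1) := by
  rw [GN_apply N hs, GN_apply N (hs.inter measurableSet_Icc), inter_assoc, inter_self]

lemma GN_Icc (N : ℕ) (hN : 1 ≤ N) {a b : ℝ} (ha : 0 ≤ a) (hab : a ≤ b) (hb : b ≤ 1) :
    GN N (Icc a b) = ENNReal.ofReal (cN N * (Real.log (b + N) - Real.log (a + N))) := by
  have hN0 : (0:ℝ) < N := by exact_mod_cast hN
  have haN : (0:ℝ) < a + N := by linarith
  have hbN : (0:ℝ) < b + N := by linarith
  rw [GN_apply N measurableSet_Icc, inter_eq_left.mpr (Icc_subset_Icc ha hb)]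
  have hcont : ContinuousOn (fun x : ℝ => cN N * (x + N)⁻¹) (Icc a b) := by
    apply ContinuousOn.mul continuousOn_const
    apply ContinuousOn.inv₀ (by fun_prop)
    intro x hx
    have := hx.1
    intro h
    nlinarith [hx.1]
  have hint : IntegrableOn (fun x : ℝ => cN N * (x + N)⁻¹) (Icc a b) :=
    hcont.integrableOn_Icc
  have hnn : 0 ≤ᵐ[volume.restrict (Icc a b)] fun x : ℝ => cN N * (x + N)⁻¹ := by
    filter_upwards [ae_restrict_mem measurableSet_Icc] with x hx
    have : (0:ℝ) < x + N := by nlinarith [hx.1]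
    exact mul_nonneg (cN_nonneg N hN) (le_of_lt (inv_pos.mpr this))
  rw [← ofReal_integral_eq_lintegral_ofReal hint hnn]
  congr 1
  have h1 : ∫ x in Icc a b, cN N * (x + N)⁻¹ = ∫ x in a..b, cN N * (x + N)⁻¹ := by
    rw [intervalIntegral.integral_of_le hab, integral_Icc_eq_integral_Ioc]
  rw [h1, intervalIntegral.integral_const_mul]
  congr 1
  have h2 : (∫ x in a..b, (x + N)⁻¹) = ∫ x in a + (N:ℝ)..b + (N:ℝ), x⁻¹ :=
    intervalIntegral.integral_comp_add_right (fun y => y⁻¹) (N:ℝ)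
  rw [h2, integral_inv, Real.log_div hbN.ne' haN.ne']
  intro h
  rcases h with ⟨h1', h2'⟩
  simp only [inf_le_iff] at *
  rcases h1' with h | h <;> linarith

lemma telescope_hasSum (N : ℕ) (hN : 1 ≤ N) {t : ℝ} (ht0 : 0 ≤ t) :
    HasSum (fun j : ℕ => (Real.log ((N:ℝ) + j + t) - Real.log ((N:ℝ) + j)) -
        (Real.log ((N:ℝ) + (j+1) + t) - Real.log ((N:ℝ) + (j+1))))
      (Real.log ((N:ℝ) + t) - Real.log (N:ℝ)) := by
  have hN0 : (0:ℝ) < N := by exact_mod_cast hN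
  set f : ℕ → ℝ := fun j => Real.log ((N:ℝ) + j + t) - Real.log ((N:ℝ) + j) with hf
  have hfnn : ∀ j, 0 ≤ f j := by
    intro j
    have h1 : (0:ℝ) < (N:ℝ) + j := by positivity
    have := Real.log_le_log h1 (by linarith : (N:ℝ) + j ≤ (N:ℝ) + j + t)
    simpa [hf] using this
  have hnn : ∀ j : ℕ, 0 ≤ f j - f (j+1) := by
    intro j
    have h1 : (0:ℝ) < (N:ℝ) + j := by positivity
    have h2 : (0:ℝ) < (N:ℝ) + j + t := by linarith
    have h3 : (0:ℝ) < (N:ℝ) + (j+1:ℕ) := by positivity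
    have h4 : (0:ℝ) < (N:ℝ) + (j+1:ℕ) + t := by linarith
    -- f j - f (j+1) = log((N+j+t)(N+j+1)) - log((N+j)(N+j+1+t)) ≥ 0
    have key : Real.log ((N:ℝ) + (j+1:ℕ) + t) + Real.log ((N:ℝ) + j)
        ≤ Real.log ((N:ℝ) + j + t) + Real.log ((N:ℝ) + (j+1:ℕ)) := by
      rw [← Real.log_mul h4.ne' h1.ne', ← Real.log_mul h2.ne' h3.ne']
      apply Real.log_le_log (by positivity)
      push_cast
      nlinarith
    simp only [hf]
    push_cast at key ⊢
    linarith
  have hpart : ∀ n : ℕ, ∑ i ∈ Finset.range n, (f i - f (i+1)) = f 0 - f n :=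
    fun n => Finset.sum_range_sub' f n
  have htend : Tendsto (fun n : ℕ => ∑ i ∈ Finset.range n, (f i - f (i+1))) atTop
      (nhds (f 0 - 0)) := by
    have hrw : (fun n : ℕ => ∑ i ∈ Finset.range n, (f i - f (i+1)))
        = fun n => f 0 - f n := funext hpart
    rw [hrw]
    apply Tendsto.const_sub
    -- f n = log(1 + t/(N+n)) → 0
    have heq : ∀ n : ℕ, f n = Real.log (1 + t / ((N:ℝ) + n)) := by
      intro n
      have h1 : (0:ℝ) < (N:ℝ) + n := by positivity
      rw [hf]
      have : (1:ℝ) + t / ((N:ℝ) + n) = ((N:ℝ) + n + t) / ((N:ℝ) + n) := by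
        field_simp
      rw [this, Real.log_div (by linarith) h1.ne']
    rw [funext heq]
    have h2 : Tendsto (fun n : ℕ => 1 + t / ((N:ℝ) + n)) atTop (nhds 1) := by
      have h3 : Tendsto (fun n : ℕ => ((N:ℝ) + n)) atTop atTop :=
        tendsto_atTop_add_const_left _ _ tendsto_natCast_atTop_atTop
      have := (tendsto_const_nhds (x := t) (f := atTop (α := ℕ))).div_atTop h3
      simpa using (tendsto_const_nhds (x := (1:ℝ))).add this
    have hcont : ContinuousAt Real.log 1 := Real.continuousAt_log one_ne_zero
    have := hcont.tendsto.comp h2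
    simpa [Function.comp_def, Real.log_one] using this
  have := (hasSum_iff_tendsto_nat_of_nonneg hnn (f 0 - 0)).mpr htend
  have hf0 : f 0 = Real.log ((N:ℝ) + t) - Real.log (N:ℝ) := by simp [hf]
  rw [hf0] at this
  have hgoal : (fun j : ℕ => (Real.log ((N:ℝ) + j + t) - Real.log ((N:ℝ) + j)) -
      (Real.log ((N:ℝ) + (j+1) + t) - Real.log ((N:ℝ) + (j+1))))
      = fun j => f j - f (j+1) := by
    funext j
    simp only [hf]
    push_cast
    ring_nf
  rw [hgoal]
  simpa using this

lemma preimage_decomp (N : ℕ) (hN : 1 ≤ N) {t : ℝ} (ht0 : 0 ≤ t) (ht1 : t < 1) :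
    TN N ⁻¹' (Iic t) ∩ Icc (0:ℝ) 1 =
      {0} ∪ ⋃ j : ℕ, Icc ((N:ℝ)/((N:ℝ) + j + t)) ((N:ℝ)/((N:ℝ) + j)) := by
  have hN0 : (0:ℝ) < N := by exact_mod_cast hN
  ext x
  simp only [mem_inter_iff, mem_preimage, mem_Iic, mem_Icc, mem_union, mem_singleton_iff,
    mem_iUnion]
  constructor
  · rintro ⟨hTx, hx0, hx1⟩
    rcases eq_or_lt_of_le hx0 with h | hx0'
    · exact Or.inl h.symm
    right
    set y := (N:ℝ) / x with hy
    have hy1 : (N:ℝ) ≤ y := by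
      rw [hy, le_div_iff₀ hx0']
      nlinarith
    have hy0 : (0:ℝ) < y := lt_of_lt_of_le hN0 hy1
    have hfloor : ((N:ℤ):ℝ) ≤ y := by exact_mod_cast hy1
    have hkN : (N:ℤ) ≤ ⌊y⌋ := Int.le_floor.mpr hfloor
    obtain ⟨j, hj⟩ : ∃ j : ℕ, ⌊y⌋ = (N:ℤ) + j := by
      refine ⟨(⌊y⌋ - N).toNat, ?_⟩
      omega
    refine ⟨j, ?_, ?_⟩
    · -- x ≥ N/(N+j+t) since y ≤ N+j+t
      have hyle : y ≤ (N:ℝ) + j + t := by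
        have h1 : y - ⌊y⌋ ≤ t := hTx
        have h2 : ((⌊y⌋:ℤ):ℝ) = (N:ℝ) + j := by push_cast [hj]; ring
        linarith [h2 ▸ h1]
      rw [div_le_iff₀ (by linarith : (0:ℝ) < (N:ℝ) + j + t)]
      have : y * x = N := by rw [hy, div_mul_cancel₀ _ hx0'.ne']
      nlinarith
    · -- x ≤ N/(N+j) since y ≥ N+j
      have hyge : (N:ℝ) + j ≤ y := by
        have h2 : ((⌊y⌋:ℤ):ℝ) = (N:ℝ) + j := by push_cast [hj]; ring
        linarith [Int.floor_le y, h2]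
      rw [le_div_iff₀ (by positivity : (0:ℝ) < (N:ℝ) + j)]
      have : y * x = N := by rw [hy, div_mul_cancel₀ _ hx0'.ne']
      nlinarith
  · rintro (rfl | ⟨j, hjl, hjr⟩)
    · refine ⟨?_, le_refl _, zero_le_one⟩
      simp [TN, ht0]
    have hdenl : (0:ℝ) < (N:ℝ) + j + t := by positivity
    have hdenr : (0:ℝ) < (N:ℝ) + j := by positivity
    have hx0 : (0:ℝ) < x := lt_of_lt_of_le (by positivity) hjl
    have hx1 : x ≤ 1 := le_trans hjr (by rw [div_le_one hdenr]; linarith)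
    set y := (N:ℝ) / x with hy
    have hxy : y * x = N := by rw [hy, div_mul_cancel₀ _ hx0.ne']
    have hyge : (N:ℝ) + j ≤ y := by
      rw [hy, le_div_iff₀ hx0]
      rw [le_div_iff₀ hdenr] at hjr
      linarith
    have hyle : y ≤ (N:ℝ) + j + t := by
      rw [hy, div_le_iff₀ hx0]
      rw [div_le_iff₀ hdenl] at hjl
      linarith
    have hfloor : ⌊y⌋ = (N:ℤ) + j := by
      apply Int.floor_eq_iff.mpr
      constructor
      · push_cast; linarith
      · push_cast; linarith
    refine ⟨?_, le_of_lt hx0, hx1⟩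
    show y - (⌊y⌋:ℝ) ≤ t
    rw [hfloor]
    push_cast
    linarith

lemma branches_disjoint (N : ℕ) (hN : 1 ≤ N) {t : ℝ} (ht0 : 0 ≤ t) (ht1 : t < 1) :
    Pairwise (Function.onFun Disjoint
      fun j : ℕ => Icc ((N:ℝ)/((N:ℝ) + j + t)) ((N:ℝ)/((N:ℝ) + j))) := by
  have hN0 : (0:ℝ) < N := by exact_mod_cast hN
  have key : ∀ i j : ℕ, i < j → Disjoint (Icc ((N:ℝ)/((N:ℝ) + i + t)) ((N:ℝ)/((N:ℝ) + i)))
      (Icc ((N:ℝ)/((N:ℝ) + j + t)) ((N:ℝ)/((N:ℝ) + j))) := by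
    intro i j hij
    apply Set.disjoint_left.mpr
    rintro x ⟨hxl, _⟩ ⟨_, hxr⟩
    -- x ≥ N/(N+i+t) and x ≤ N/(N+j); but N/(N+j) < N/(N+i+t)
    have hdi : (0:ℝ) < (N:ℝ) + i + t := by positivity
    have hdj : (0:ℝ) < (N:ℝ) + j := by positivity
    have hlt : (N:ℝ)/((N:ℝ) + j) < (N:ℝ)/((N:ℝ) + i + t) := by
      apply div_lt_div_of_pos_left hN0 hdi
      have : (i:ℝ) + 1 ≤ j := by exact_mod_cast hij
      linarith
    linarith
  intro i j hij
  rcases lt_or_gt_of_ne hij with h | h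
  · exact key i j h
  · exact (key j i h).symm

lemma key_lt_one (N : ℕ) (hN : 1 ≤ N) {t : ℝ} (ht0 : 0 ≤ t) (ht1 : t < 1) :
    GN N (TN N ⁻¹' Iic t) = ENNReal.ofReal (cN N * (Real.log ((N:ℝ) + t) - Real.log N)) := by
  have hN0 : (0:ℝ) < N := by exact_mod_cast hN
  have hpre : MeasurableSet (TN N ⁻¹' Iic t) := (measurable_TN N) measurableSet_Iic
  rw [GN_inter_Icc N hpre, preimage_decomp N hN ht0 ht1]
  have h0 : GN N ({(0:ℝ)} ∪ ⋃ j : ℕ, Icc ((N:ℝ)/((N:ℝ) + j + t)) ((N:ℝ)/((N:ℝ) + j)))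
      = GN N (⋃ j : ℕ, Icc ((N:ℝ)/((N:ℝ) + j + t)) ((N:ℝ)/((N:ℝ) + j))) := by
    have hz : GN N {(0:ℝ)} = 0 := by
      rw [GN_apply N (measurableSet_singleton 0)]
      apply setLIntegral_measure_zero
      exact measure_mono_null (inter_subset_left) Real.volume_singleton
    apply le_antisymm
    · calc GN N ({(0:ℝ)} ∪ _) ≤ GN N {(0:ℝ)} + GN N _ := measure_union_le _ _
        _ = GN N _ := by rw [hz, zero_add]
    · exact measure_mono subset_union_right
  rw [h0, measure_iUnion (branches_disjoint N hN ht0 ht1) (fun j => measurableSet_Icc)]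
  have hterm : ∀ j : ℕ, GN N (Icc ((N:ℝ)/((N:ℝ) + j + t)) ((N:ℝ)/((N:ℝ) + j)))
      = ENNReal.ofReal (cN N * ((Real.log ((N:ℝ) + j + t) - Real.log ((N:ℝ) + j)) -
          (Real.log ((N:ℝ) + (j+1) + t) - Real.log ((N:ℝ) + (j+1))))) := by
    intro j
    have hdi : (0:ℝ) < (N:ℝ) + j + t := by positivity
    have hdj : (0:ℝ) < (N:ℝ) + j := by positivity
    have ha : (0:ℝ) ≤ (N:ℝ)/((N:ℝ) + j + t) := by positivity
    have hab : (N:ℝ)/((N:ℝ) + j + t) ≤ (N:ℝ)/((N:ℝ) + j) :=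
      div_le_div_of_nonneg_left hN0.le hdj (by linarith)
    have hb : (N:ℝ)/((N:ℝ) + j) ≤ 1 := by rw [div_le_one hdj]; linarith
    rw [GN_Icc N hN ha hab hb]
    congr 1
    congr 1
    have e1 : (N:ℝ)/((N:ℝ) + j) + N = (N:ℝ) * ((N:ℝ) + (j+1)) / ((N:ℝ) + j) := by
      field_simp; ring
    have e2 : (N:ℝ)/((N:ℝ) + j + t) + N = (N:ℝ) * ((N:ℝ) + (j+1) + t) / ((N:ℝ) + j + t) := by
      field_simp; ring
    rw [e1, e2, Real.log_div (by positivity) hdj.ne', Real.log_div (by positivity) hdi.ne',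
      Real.log_mul hN0.ne' (by positivity), Real.log_mul hN0.ne' (by positivity)]
    ring
  simp only [hterm]
  have hsum := telescope_hasSum N hN ht0
  have hnn : ∀ j : ℕ, 0 ≤ cN N * ((Real.log ((N:ℝ) + j + t) - Real.log ((N:ℝ) + j)) -
      (Real.log ((N:ℝ) + (j+1) + t) - Real.log ((N:ℝ) + (j+1)))) := by
    intro j
    apply mul_nonneg (cN_nonneg N hN)
    -- term is f j - f (j+1) ≥ 0; reuse log inequality
    have hdi : (0:ℝ) < (N:ℝ) + j := by positivity
    have h4 : (0:ℝ) < (N:ℝ) + (j+1) + t := by positivity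
    have h2 : (0:ℝ) < (N:ℝ) + j + t := by linarith
    have h3 : (0:ℝ) < (N:ℝ) + (j+1) := by positivity
    have key : Real.log ((N:ℝ) + (j+1) + t) + Real.log ((N:ℝ) + j)
        ≤ Real.log ((N:ℝ) + j + t) + Real.log ((N:ℝ) + (j+1)) := by
      rw [← Real.log_mul h4.ne' hdi.ne', ← Real.log_mul h2.ne' h3.ne']
      apply Real.log_le_log (by positivity)
      nlinarith
    linarith
  have hsummable : Summable (fun j : ℕ => cN N *
      ((Real.log ((N:ℝ) + j + t) - Real.log ((N:ℝ) + j)) -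
      (Real.log ((N:ℝ) + (j+1) + t) - Real.log ((N:ℝ) + (j+1))))) :=
    (hsum.summable).mul_left (cN N)
  rw [← ENNReal.ofReal_tsum_of_nonneg hnn hsummable]
  congr 1
  rw [tsum_mul_left, hsum.tsum_eq]

lemma TN_nonneg (N : ℕ) (x : ℝ) : 0 ≤ TN N x := Int.fract_nonneg _

lemma TN_lt_one (N : ℕ) (x : ℝ) : TN N x < 1 := Int.fract_lt_one _

lemma GN_Iic (N : ℕ) (hN : 1 ≤ N) (t : ℝ) (ht0 : 0 ≤ t) (ht1 : t ≤ 1) :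
    GN N (Iic t) = ENNReal.ofReal (cN N * (Real.log ((N:ℝ) + t) - Real.log N)) := by
  have hN0 : (0:ℝ) < N := by exact_mod_cast hN
  have hset : Iic t ∩ Icc (0:ℝ) 1 = Icc 0 t := by
    ext x
    simp only [mem_inter_iff, mem_Iic, mem_Icc]
    constructor
    · rintro ⟨h1, h2, h3⟩; exact ⟨h2, h1⟩
    · rintro ⟨h1, h2⟩; exact ⟨h2, h1, by linarith⟩
  rw [GN_inter_Icc N measurableSet_Iic, hset, GN_Icc N hN le_rfl ht0 ht1, zero_add,
    add_comm t (N:ℝ)]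

lemma GN_finite (N : ℕ) (hN : 1 ≤ N) : IsFiniteMeasure (GN N) := by
  constructor
  rw [GN_inter_Icc N MeasurableSet.univ, univ_inter, GN_Icc N hN le_rfl zero_le_one le_rfl]
  exact ENNReal.ofReal_lt_top

/-- The probability measure `G_N` is `T_N`-invariant: for every Borel set `A ⊆ I`,
`G_N(T_N⁻¹(A)) = G_N(A)`. -/
theorem GN_invariant (N : ℕ) (hN : 1 ≤ N) (A : Set ℝ)
    (hA : MeasurableSet A) (hAI : A ⊆ Icc (0:ℝ) 1) :
    GN N (TN N ⁻¹' A) = GN N A := by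
  haveI : IsFiniteMeasure (GN N) := GN_finite N hN
  have hmeas := measurable_TN N
  have hmap : (GN N).map (TN N) = GN N := by
    haveI : IsFiniteMeasure ((GN N).map (TN N)) := by
      constructor
      rw [Measure.map_apply hmeas MeasurableSet.univ, preimage_univ]
      exact measure_lt_top _ _
    apply MeasureTheory.Measure.ext_of_Iic
    intro t
    rw [Measure.map_apply hmeas measurableSet_Iic]
    rcases lt_or_ge t 0 with ht | ht0
    · have h1 : TN N ⁻¹' Iic t = ∅ := by
        ext x
        simp only [mem_preimage, mem_Iic, mem_empty_iff_false, iff_false, not_le]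
        exact lt_of_lt_of_le ht (TN_nonneg N x)
      have h2 : Iic t ∩ Icc (0:ℝ) 1 = ∅ := by
        ext x
        simp only [mem_inter_iff, mem_Iic, mem_Icc, mem_empty_iff_false, iff_false]
        rintro ⟨hx, hx0, _⟩
        linarith
      rw [h1, GN_inter_Icc N measurableSet_Iic, h2]
    rcases lt_or_ge t 1 with ht1 | ht1
    · rw [key_lt_one N hN ht0 ht1, GN_Iic N hN t ht0 ht1.le]
    · have h1 : TN N ⁻¹' Iic t = univ := by
        ext x
        simp only [mem_preimage, mem_Iic, mem_univ, iff_true]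
        exact le_trans (TN_lt_one N x).le ht1
      have h2 : Iic t ∩ Icc (0:ℝ) 1 = Icc 0 1 := by
        apply inter_eq_right.mpr
        intro x hx
        exact le_trans hx.2 ht1
      rw [h1, GN_inter_Icc N MeasurableSet.univ, univ_inter,
        GN_inter_Icc N measurableSet_Iic, h2]
  rw [← Measure.map_apply hmeas hA, hmap]
end

section
/- For every irrational x ∈ (0,1) and every n ≥ 1, the convergents satisfy |x − p_n(x)/q_n(x)| < N^n/q_n(x)² ≤ 1/N^n. -/
open MeasureTheory Set Filter
open scoped Classical Topology ENNReal

/-- `digit N x k` is the (k+1)-st N-continued fraction digit `a_{k+1}(x) = ⌊N / T_N^k(x)⌋`. -/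
noncomputable def digit (N : ℕ) (x : ℝ) (k : ℕ) : ℕ := ⌊(N : ℝ) / (TN N)^[k] x⌋₊

/-- Numerators: `pA N a (m+1) = p_m`, where `p_{-1}=1`, `p_0=0`, `p_k = a_k p_{k-1} + N p_{k-2}`
and `a k` denotes the digit `a_{k+1}`. -/
noncomputable def pA (N : ℕ) (a : ℕ → ℕ) : ℕ → ℝ
  | 0 => 1
  | 1 => 0
  | (k+2) => (a k : ℝ) * pA N a (k+1) + (N : ℝ) * pA N a k

/-- Denominators: `qA N a (m+1) = q_m`, where `q_{-1}=0`, `q_0=1`, `q_k = a_k q_{k-1} + N q_{k-2}`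
and `a k` denotes the digit `a_{k+1}`. -/
noncomputable def qA (N : ℕ) (a : ℕ → ℕ) : ℕ → ℝ
  | 0 => 0
  | 1 => 1
  | (k+2) => (a k : ℝ) * qA N a (k+1) + (N : ℝ) * qA N a k

lemma TN_step {N : ℕ} (hN : 1 ≤ N) {y : ℝ} (hy : y ∈ Set.Ioo (0:ℝ) 1) (hyi : Irrational y) :
    TN N y ∈ Set.Ioo (0:ℝ) 1 ∧ Irrational (TN N y) := by
  have hNy : Irrational ((N : ℝ) / y) := hyi.natCast_div (by omega)
  have hfr : Irrational (TN N y) := by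
    simpa [TN] using hNy.sub_intCast ⌊(N:ℝ)/y⌋
  have h0 : TN N y ≠ 0 := fun h => by
    rw [h] at hfr; exact hfr ⟨0, by simp⟩
  have hfract : TN N y = Int.fract ((N:ℝ)/y) := rfl
  refine ⟨⟨?_, ?_⟩, hfr⟩
  · rcases lt_or_eq_of_le (Int.fract_nonneg ((N:ℝ)/y)) with h | h
    · simpa [hfract] using h
    · exact absurd h.symm (by simpa [hfract] using h0)
  · simpa [hfract] using Int.fract_lt_one ((N:ℝ)/y)

lemma TN_iter {N : ℕ} (hN : 1 ≤ N) {x : ℝ} (hx : x ∈ Set.Ioo (0:ℝ) 1) (hxi : Irrational x)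
    (k : ℕ) : (TN N)^[k] x ∈ Set.Ioo (0:ℝ) 1 ∧ Irrational ((TN N)^[k] x) := by
  induction k with
  | zero => exact ⟨hx, hxi⟩
  | succ k ih =>
      rw [Function.iterate_succ_apply']
      exact TN_step hN ih.1 ih.2

lemma digit_eq {N : ℕ} (hN : 1 ≤ N) {x : ℝ} (hx : x ∈ Set.Ioo (0:ℝ) 1) (hxi : Irrational x)
    (k : ℕ) : (N : ℝ) = (TN N)^[k] x * ((digit N x k : ℝ) + (TN N)^[k+1] x) := by
  set y := (TN N)^[k] x with hy
  obtain ⟨hyI, _⟩ := TN_iter hN hx hxi k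
  have hy0 : (0:ℝ) < y := hyI.1
  have hpos : (0:ℝ) ≤ (N:ℝ)/y := div_nonneg (by positivity) hy0.le
  have hcast : ((digit N x k : ℝ)) = (⌊(N:ℝ)/y⌋ : ℝ) := by
    rw [digit, ← hy]
    exact natCast_floor_eq_intCast_floor hpos
  have hTN : (TN N)^[k+1] x = (N:ℝ)/y - ⌊(N:ℝ)/y⌋ := by
    rw [Function.iterate_succ_apply', ← hy, TN]
  rw [hcast, hTN]
  field_simp
  ring

lemma digit_ge {N : ℕ} (hN : 1 ≤ N) {x : ℝ} (hx : x ∈ Set.Ioo (0:ℝ) 1) (hxi : Irrational x)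
    (k : ℕ) : N ≤ digit N x k := by
  obtain ⟨hyI, _⟩ := TN_iter hN hx hxi k
  have h1 : (N : ℝ) ≤ (N:ℝ) / (TN N)^[k] x := by
    rw [le_div_iff₀ hyI.1]
    nlinarith [hyI.1, hyI.2, (show (1:ℝ) ≤ N by exact_mod_cast hN)]
  exact Nat.le_floor h1

lemma qA_nonneg_pos {N : ℕ} (hN : 1 ≤ N) {a : ℕ → ℕ} (ha : ∀ k, 1 ≤ a k) (n : ℕ) :
    0 ≤ qA N a n ∧ 0 < qA N a (n+1) := by
  induction n with
  | zero => simp [qA]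
  | succ n ih =>
      refine ⟨ih.2.le, ?_⟩
      show 0 < (a n : ℝ) * qA N a (n+1) + (N : ℝ) * qA N a n
      have hN' : (0:ℝ) < N := by exact_mod_cast hN
      have h1 : (1:ℝ) ≤ a n := by exact_mod_cast ha n
      nlinarith [ih.1, ih.2]

lemma qA_ge {N : ℕ} (hN : 1 ≤ N) {a : ℕ → ℕ} (ha : ∀ k, N ≤ a k) (n : ℕ) :
    (N:ℝ)^n ≤ qA N a (n+1) := by
  induction n with
  | zero => simp [qA]
  | succ n ih =>
      show (N:ℝ)^(n+1) ≤ (a n : ℝ) * qA N a (n+1) + (N : ℝ) * qA N a n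
      have h1 : (N:ℝ) ≤ a n := by exact_mod_cast ha n
      have ha1 : ∀ k, 1 ≤ a k := fun k => le_trans hN (ha k)
      have h2 : (0:ℝ) ≤ qA N a n := (qA_nonneg_pos hN ha1 n).1
      have h3 : (0:ℝ) < qA N a (n+1) := (qA_nonneg_pos hN ha1 n).2
      have hN' : (0:ℝ) < N := by exact_mod_cast hN
      calc (N:ℝ)^(n+1) = (N:ℝ) * (N:ℝ)^n := by ring
        _ ≤ (N:ℝ) * qA N a (n+1) := by nlinarith
        _ ≤ (a n : ℝ) * qA N a (n+1) + (N:ℝ) * qA N a n := by nlinarith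

lemma det_eq {N : ℕ} {a : ℕ → ℕ} (n : ℕ) :
    pA N a (n+1) * qA N a n - pA N a n * qA N a (n+1) = -(-(N:ℝ))^n := by
  induction n with
  | zero => simp [pA, qA]
  | succ n ih =>
      have hp : pA N a (n+2) = (a n : ℝ) * pA N a (n+1) + (N : ℝ) * pA N a n := rfl
      have hq : qA N a (n+2) = (a n : ℝ) * qA N a (n+1) + (N : ℝ) * qA N a n := rfl
      rw [hp, hq, pow_succ]
      nlinarith [ih]

lemma conv_identity {N : ℕ} (hN : 1 ≤ N) {x : ℝ} (hx : x ∈ Set.Ioo (0:ℝ) 1)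
    (hxi : Irrational x) (n : ℕ) :
    x * (qA N (digit N x) (n+1) + qA N (digit N x) n * (TN N)^[n] x)
      = pA N (digit N x) (n+1) + pA N (digit N x) n * (TN N)^[n] x := by
  induction n with
  | zero => simp [pA, qA]
  | succ n ih =>
      have hkey := digit_eq hN hx hxi n
      have hp : pA N (digit N x) (n+2)
          = (digit N x n : ℝ) * pA N (digit N x) (n+1) + (N : ℝ) * pA N (digit N x) n := rfl
      have hq : qA N (digit N x) (n+2)
          = (digit N x n : ℝ) * qA N (digit N x) (n+1) + (N : ℝ) * qA N (digit N x) n := rfl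
      rw [hp, hq]
      linear_combination ((digit N x n : ℝ) + (TN N)^[n+1] x) * ih
        + (x * qA N (digit N x) n - pA N (digit N x) n) * hkey

/-- For every irrational `x ∈ (0,1)` and every `n ≥ 1`,
`|x − p_n(x)/q_n(x)| < N^n/q_n(x)² ≤ 1/N^n`. -/
theorem convergents_error (N : ℕ) (hN : 1 ≤ N) (x : ℝ) (hx : x ∈ Ioo (0:ℝ) 1)
    (hxi : Irrational x) (n : ℕ) (hn : 1 ≤ n) :
    |x - pA N (digit N x) (n+1) / qA N (digit N x) (n+1)|
        < (N : ℝ) ^ n / (qA N (digit N x) (n+1)) ^ 2 ∧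
      (N : ℝ) ^ n / (qA N (digit N x) (n+1)) ^ 2 ≤ 1 / (N : ℝ) ^ n := by
  set a := digit N x
  set q := qA N a (n+1) with hqdef
  set q' := qA N a n
  set p := pA N a (n+1)
  set p' := pA N a n
  set y := (TN N)^[n] x with hydef
  have hyI := (TN_iter hN hx hxi n).1
  have hy0 : (0:ℝ) < y := hyI.1
  have hy1 : y < 1 := hyI.2
  have ha1 : ∀ k, 1 ≤ a k := fun k => le_trans hN (digit_ge hN hx hxi k)
  have hq'0 : (0:ℝ) ≤ q' := (qA_nonneg_pos hN ha1 n).1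
  have hq0 : (0:ℝ) < q := (qA_nonneg_pos hN ha1 n).2
  have hNpos : (0:ℝ) < N := by exact_mod_cast hN
  have hid : x * (q + q' * y) = p + p' * y := conv_identity hN hx hxi n
  have hdet : p * q' - p' * q = -(-(N:ℝ))^n := det_eq n
  have hden : (0:ℝ) < q + q' * y := by nlinarith
  have hqn : (N:ℝ)^n ≤ q := qA_ge hN (fun k => digit_ge hN hx hxi k) n
  have hNn : (0:ℝ) < (N:ℝ)^n := pow_pos hNpos n
  have h1 : x - p / q = (x * q - p) / q := by field_simp
  have h2 : x * q - p = y * (p' * q - p * q') / (q + q' * y) := by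
    rw [eq_div_iff hden.ne']
    linear_combination q * hid
  have hdiff : x - p / q = y * (p' * q - p * q') / (q * (q + q' * y)) := by
    rw [h1, h2, div_div]; ring_nf
  have habs : |x - p / q| = y * (N:ℝ)^n / (q * (q + q' * y)) := by
    rw [hdiff, abs_div, abs_of_pos (by positivity : (0:ℝ) < q * (q + q' * y))]
    congr 1
    rw [abs_mul, abs_of_pos hy0]
    congr 1
    have h3 : p' * q - p * q' = (-(N:ℝ))^n := by linarith [hdet]
    rw [h3, abs_pow, abs_neg, abs_of_pos hNpos]
  constructor
  · rw [habs]
    rw [div_lt_div_iff₀ (by positivity) (by positivity)]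
    have hqsq : q^2 ≤ q * (q + q' * y) := by nlinarith [mul_nonneg (mul_nonneg hq0.le hq'0) hy0.le]
    have hlt : y * (N:ℝ)^n * q^2 < (N:ℝ)^n * q^2 := by
      have := mul_pos hNn (mul_pos hq0 hq0)
      nlinarith
    nlinarith [mul_le_mul_of_nonneg_left hqsq hNn.le]
  · rw [div_le_div_iff₀ (by positivity) (by positivity)]
    have : (N:ℝ)^n * (N:ℝ)^n ≤ q^2 := by nlinarith
    nlinarith
end

section
/- (Brodén–Borel–Lévy formula for N-continued fractions.) For every n ≥ 1, all integers i_1,…,i_n ≥ N, and every x ∈ I, one has λ({x' ∈ I_N(i_1,…,i_n) : T_N^n(x') < x}) = λ(I_N(i_1,…,i_n)) · (s_n + N)x/(s_n x + N), where s_n = [i_n, i_{n−1}, …, i_1]_N = N·q_{n−1}/q_n, the p's and q's being computed from the digits i_1,…,i_n. -/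
open MeasureTheory Set Filter
open scoped Classical Topology ENNReal

/-- Value of the finite N-continued fraction `[ℓ 0, …, ℓ (d-1)]_N = N/(ℓ 0 + N/(ℓ 1 + ⋯ + N/ℓ (d-1)))`. -/
noncomputable def cfVal (N : ℕ) : (ℕ → ℕ) → ℕ → ℝ
  | _, 0 => 0
  | ℓ, (d+1) => (N : ℝ) / ((ℓ 0 : ℝ) + cfVal N (fun k => ℓ (k+1)) d)

/-- The fundamental interval `I_N(i 0, …, i (n-1))` of rank `n`:
irrational `x ∈ (0,1)` whose first `n` digits are `i 0, …, i (n-1)`. -/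
def fund (N n : ℕ) (i : ℕ → ℕ) : Set ℝ :=
  {x ∈ Ioo (0:ℝ) 1 | Irrational x ∧ ∀ k < n, digit N x k = i k}

/-- finite CF with free tail: `FF N n i t = N/(i 0 + N/(i 1 + ⋯ + N/(i (n-1) + t)))`. -/
noncomputable def FF (N : ℕ) : ℕ → (ℕ → ℕ) → ℝ → ℝ
  | 0, _, t => t
  | (n+1), i, t => (N : ℝ) / ((i 0 : ℝ) + FF N n (fun k => i (k+1)) t)

/-- continuant matrix (a,b,c,d): FF n i t = (a t + b)/(c t + d). -/
def mat (N : ℕ) : ℕ → (ℕ → ℕ) → ℤ × ℤ × ℤ × ℤ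
  | 0, _ => (1, 0, 0, 1)
  | (n+1), i =>
    let m := mat N n (fun k => i (k+1))
    ((N:ℤ) * m.2.2.1, (N:ℤ) * m.2.2.2, m.1 + (i 0 : ℤ) * m.2.2.1, m.2.1 + (i 0 : ℤ) * m.2.2.2)

lemma mat_succ (N n : ℕ) (i : ℕ → ℕ) :
    mat N (n+1) i = ((N:ℤ) * (mat N n (fun k => i (k+1))).2.2.1,
      (N:ℤ) * (mat N n (fun k => i (k+1))).2.2.2,
      (mat N n (fun k => i (k+1))).1 + (i 0 : ℤ) * (mat N n (fun k => i (k+1))).2.2.1,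
      (mat N n (fun k => i (k+1))).2.1 + (i 0 : ℤ) * (mat N n (fun k => i (k+1))).2.2.2) := rfl

lemma mat_nonneg (N : ℕ) (hN : 1 ≤ N) : ∀ (n : ℕ) (i : ℕ → ℕ), (∀ k < n, 1 ≤ i k) →
    0 ≤ (mat N n i).1 ∧ 0 ≤ (mat N n i).2.1 ∧ 0 ≤ (mat N n i).2.2.1 ∧ 1 ≤ (mat N n i).2.2.2 := by
  intro n
  induction n with
  | zero => intro i _; simp [mat]
  | succ n ih =>
    intro i hi
    obtain ⟨ha, hb, hc, hd⟩ := ih (fun k => i (k+1)) (fun k hk => hi (k+1) (by omega))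
    have hi0 : (1:ℤ) ≤ (i 0 : ℤ) := by exact_mod_cast hi 0 (by omega)
    have hN' : (1:ℤ) ≤ (N:ℤ) := by exact_mod_cast hN
    rw [mat_succ]; dsimp only
    refine ⟨by positivity, by positivity, by nlinarith, by nlinarith⟩

lemma mat_det (N : ℕ) : ∀ (n : ℕ) (i : ℕ → ℕ),
    (mat N n i).1 * (mat N n i).2.2.2 - (mat N n i).2.1 * (mat N n i).2.2.1 = (-(N:ℤ))^n := by
  intro n
  induction n with
  | zero => intro i; simp [mat]
  | succ n ih =>
    intro i
    have := ih (fun k => i (k+1))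
    rw [mat_succ, pow_succ]; dsimp only
    nlinarith [this]

lemma mat_succ_right (N : ℕ) : ∀ (n : ℕ) (i : ℕ → ℕ),
    mat N (n+1) i = ((mat N n i).2.1, (N:ℤ) * (mat N n i).1 + (i n : ℤ) * (mat N n i).2.1,
      (mat N n i).2.2.2, (N:ℤ) * (mat N n i).2.2.1 + (i n : ℤ) * (mat N n i).2.2.2) := by
  intro n
  induction n with
  | zero => intro i; simp [mat, mat_succ]
  | succ n ih =>
    intro i
    rw [mat_succ, ih (fun k => i (k+1)), mat_succ N n i]
    dsimp only
    simp only [Prod.mk.injEq]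
    refine ⟨?_, ?_, ?_, ?_⟩ <;> first | rfl | trivial | ring

lemma cfVal_shift (N d : ℕ) (f g : ℕ → ℕ) (h : ∀ k, f k = g k) : cfVal N f d = cfVal N g d := by
  have : f = g := funext h
  rw [this]

lemma cfVal_rev (N : ℕ) (hN : 1 ≤ N) : ∀ (n : ℕ) (i : ℕ → ℕ), (∀ k < n, 1 ≤ i k) →
    cfVal N (fun k => i (n - 1 - k)) n
      = (N : ℝ) * ((mat N n i).2.2.1 : ℝ) / ((mat N n i).2.2.2 : ℝ) := by
  intro n
  induction n with
  | zero => intro i _; simp [cfVal, mat]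
  | succ n ih =>
    intro i hi
    have key := ih i (fun k hk => hi k (by omega))
    obtain ⟨_, _, hc, hd⟩ := mat_nonneg N hN n i (fun k hk => hi k (by omega))
    have hcR : (0:ℝ) ≤ ((mat N n i).2.2.1 : ℝ) := by exact_mod_cast hc
    have hdR : (1:ℝ) ≤ ((mat N n i).2.2.2 : ℝ) := by exact_mod_cast hd
    have hin : (1:ℝ) ≤ (i n : ℝ) := by exact_mod_cast hi n (by omega)
    have hNR : (1:ℝ) ≤ (N:ℝ) := by exact_mod_cast hN
    rw [mat_succ_right]
    dsimp only
    show (N : ℝ) / ((i ((n+1) - 1 - 0) : ℝ) + cfVal N (fun k => i ((n+1) - 1 - (k+1))) n) = _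
    have h1 : cfVal N (fun k => i ((n+1) - 1 - (k+1))) n = cfVal N (fun k => i (n - 1 - k)) n := by
      apply cfVal_shift; intro k; congr 1; omega
    have h2 : ((n+1) - 1 - 0) = n := by omega
    rw [h1, h2, key]
    push_cast
    have hd0 : ((mat N n i).2.2.2 : ℝ) ≠ 0 := by linarith
    have hp1 : (0:ℝ) < (i n : ℝ) + (N:ℝ) * ((mat N n i).2.2.1 : ℝ) / ((mat N n i).2.2.2 : ℝ) := by
      have : (0:ℝ) ≤ (N:ℝ) * ((mat N n i).2.2.1 : ℝ) / ((mat N n i).2.2.2 : ℝ) := by positivity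
      linarith
    have hp2 : (0:ℝ) < (N:ℝ) * ((mat N n i).2.2.1 : ℝ) + (i n : ℝ) * ((mat N n i).2.2.2 : ℝ) := by
      nlinarith
    rw [div_eq_div_iff hp1.ne' hp2.ne']
    field_simp
    ring

lemma FF_nonneg (N : ℕ) (hN : 1 ≤ N) : ∀ (n : ℕ) (i : ℕ → ℕ), (∀ k < n, 1 ≤ i k) →
    ∀ t : ℝ, 0 ≤ t → 0 ≤ FF N n i t := by
  intro n
  induction n with
  | zero => intro i _ t ht; exact ht
  | succ n ih =>
    intro i hi t ht
    have h0 := ih (fun k => i (k+1)) (fun k hk => hi (k+1) (by omega)) t ht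
    have hi0 : (1:ℝ) ≤ (i 0 : ℝ) := by exact_mod_cast hi 0 (by omega)
    show 0 ≤ (N : ℝ) / ((i 0 : ℝ) + FF N n (fun k => i (k+1)) t)
    positivity

lemma FF_eq (N : ℕ) (hN : 1 ≤ N) : ∀ (n : ℕ) (i : ℕ → ℕ), (∀ k < n, 1 ≤ i k) →
    ∀ t : ℝ, 0 ≤ t →
    FF N n i t = (((mat N n i).1 : ℝ) * t + ((mat N n i).2.1 : ℝ))
      / (((mat N n i).2.2.1 : ℝ) * t + ((mat N n i).2.2.2 : ℝ)) := by
  intro n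
  induction n with
  | zero => intro i _ t ht; simp [FF, mat]
  | succ n ih =>
    intro i hi t ht
    have hi' : ∀ k < n, 1 ≤ (fun k => i (k+1)) k := fun k hk => hi (k+1) (by omega)
    have key := ih (fun k => i (k+1)) hi' t ht
    obtain ⟨ha, hb, hc, hd⟩ := mat_nonneg N hN n (fun k => i (k+1)) hi'
    have haR : (0:ℝ) ≤ ((mat N n fun k => i (k+1)).1 : ℝ) := by exact_mod_cast ha
    have hbR : (0:ℝ) ≤ ((mat N n fun k => i (k+1)).2.1 : ℝ) := by exact_mod_cast hb
    have hcR : (0:ℝ) ≤ ((mat N n fun k => i (k+1)).2.2.1 : ℝ) := by exact_mod_cast hc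
    have hdR : (1:ℝ) ≤ ((mat N n fun k => i (k+1)).2.2.2 : ℝ) := by exact_mod_cast hd
    have hi0 : (1:ℝ) ≤ (i 0 : ℝ) := by exact_mod_cast hi 0 (by omega)
    have hden : (0:ℝ) < ((mat N n fun k => i (k+1)).2.2.1 : ℝ) * t
        + ((mat N n fun k => i (k+1)).2.2.2 : ℝ) := by nlinarith
    have hnum : (0:ℝ) ≤ ((mat N n fun k => i (k+1)).1 : ℝ) * t
        + ((mat N n fun k => i (k+1)).2.1 : ℝ) := by nlinarith
    show (N : ℝ) / ((i 0 : ℝ) + FF N n (fun k => i (k+1)) t) = _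
    rw [key, mat_succ]
    dsimp only
    push_cast
    have hp1 : (0:ℝ) < (i 0 : ℝ)
        + (((mat N n fun k => i (k+1)).1 : ℝ) * t + ((mat N n fun k => i (k+1)).2.1 : ℝ))
          / (((mat N n fun k => i (k+1)).2.2.1 : ℝ) * t + ((mat N n fun k => i (k+1)).2.2.2 : ℝ)) := by
      have := div_nonneg hnum hden.le
      linarith
    have hp2 : (0:ℝ) < (((mat N n fun k => i (k+1)).1 : ℝ) + (i 0 : ℝ) * ((mat N n fun k => i (k+1)).2.2.1 : ℝ)) * t
        + (((mat N n fun k => i (k+1)).2.1 : ℝ) + (i 0 : ℝ) * ((mat N n fun k => i (k+1)).2.2.2 : ℝ)) := by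
      nlinarith
    rw [div_eq_div_iff hp1.ne' hp2.ne']
    field_simp
    ring

lemma digit_succ (N : ℕ) (x : ℝ) (k : ℕ) : digit N x (k+1) = digit N (TN N x) k := by
  simp [digit, Function.iterate_succ_apply]

lemma FF_succ (N n : ℕ) (i : ℕ → ℕ) (t : ℝ) :
    FF N (n+1) i t = (N : ℝ) / ((i 0 : ℝ) + FF N n (fun k => i (k+1)) t) := rfl

lemma fwd (N : ℕ) (hN : 1 ≤ N) : ∀ (n : ℕ) (i : ℕ → ℕ), (∀ k < n, N ≤ i k) →
    ∀ t : ℝ, t ∈ Ioo (0:ℝ) 1 → Irrational t →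
    FF N n i t ∈ fund N n i ∧ (TN N)^[n] (FF N n i t) = t := by
  intro n
  induction n with
  | zero =>
    intro i _ t ht htirr
    exact ⟨⟨ht, htirr, by omega⟩, rfl⟩
  | succ n ih =>
    intro i hi t ht htirr
    obtain ⟨hu_fund, hu_it⟩ := ih (fun k => i (k+1)) (fun k hk => hi (k+1) (by omega)) t ht htirr
    set u := FF N n (fun k => i (k+1)) t with hu_def
    obtain ⟨huIoo, huirr, hudig⟩ := hu_fund
    have hNR : (1:ℝ) ≤ (N:ℝ) := by exact_mod_cast hN
    have hi0R : (N:ℝ) ≤ (i 0 : ℝ) := by exact_mod_cast hi 0 (by omega)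
    have hsum_pos : (0:ℝ) < (i 0 : ℝ) + u := by
      have := huIoo.1; linarith
    have hsum_gt : (N:ℝ) < (i 0 : ℝ) + u := by
      have := huIoo.1; linarith
    set x' := (N : ℝ) / ((i 0 : ℝ) + u) with hx'_def
    have hx'_pos : 0 < x' := by positivity
    have hx'_lt : x' < 1 := by
      rw [hx'_def, div_lt_one hsum_pos]; exact hsum_gt
    have hsumirr : Irrational ((i 0 : ℝ) + u) := huirr.natCast_add (i 0)
    have hx'_irr : Irrational x' := hsumirr.natCast_div (by omega)
    have hx'_ne : x' ≠ 0 := ne_of_gt hx'_pos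
    have hNx' : (N:ℝ) / x' = (i 0 : ℝ) + u := by
      rw [hx'_def]
      field_simp
    have hfloorI : ⌊(i 0 : ℝ) + u⌋ = (i 0 : ℤ) := by
      refine Int.floor_eq_iff.mpr ⟨?_, ?_⟩
      · push_cast; linarith [huIoo.1]
      · push_cast; linarith [huIoo.2]
    have hTN : TN N x' = u := by
      show (N:ℝ)/x' - (⌊(N:ℝ)/x'⌋ : ℝ) = u
      rw [hNx', hfloorI]
      push_cast; ring
    have hdig0 : digit N x' 0 = i 0 := by
      show ⌊(N:ℝ) / (TN N)^[0] x'⌋₊ = i 0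
      rw [Function.iterate_zero_apply, hNx']
      refine (Nat.floor_eq_iff (by positivity)).mpr ⟨?_, ?_⟩
      · linarith [huIoo.1]
      · push_cast; linarith [huIoo.2]
    have hFF : FF N (n+1) i t = x' := rfl
    rw [hFF]
    refine ⟨⟨⟨hx'_pos, hx'_lt⟩, hx'_irr, ?_⟩, ?_⟩
    · intro k hk
      cases k with
      | zero => exact hdig0
      | succ k =>
        rw [digit_succ, hTN]
        exact hudig k (by omega)
    · rw [Function.iterate_succ_apply, hTN, hu_it]

lemma bwd (N : ℕ) (hN : 1 ≤ N) : ∀ (n : ℕ) (i : ℕ → ℕ),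
    ∀ x' ∈ fund N n i, (TN N)^[n] x' ∈ Ioo (0:ℝ) 1 ∧ Irrational ((TN N)^[n] x')
      ∧ x' = FF N n i ((TN N)^[n] x') := by
  intro n
  induction n with
  | zero =>
    intro i x' hx'
    exact ⟨hx'.1, hx'.2.1, rfl⟩
  | succ n ih =>
    intro i x' hx'
    obtain ⟨⟨hx'_pos, hx'_lt⟩, hx'_irr, hdig⟩ := hx'
    have hx'_ne : x' ≠ 0 := ne_of_gt hx'_pos
    have hNne : (N:ℝ) ≠ 0 := by positivity
    have hNx'_irr : Irrational ((N:ℝ)/x') := hx'_irr.natCast_div (by omega)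
    have hNx'_pos : (0:ℝ) < (N:ℝ)/x' := by positivity
    have hgt : (N:ℝ) < (N:ℝ)/x' := by
      have hNR : (1:ℝ) ≤ (N:ℝ) := by exact_mod_cast hN
      rw [lt_div_iff₀ hx'_pos]
      nlinarith
    have hi0 : i 0 = ⌊(N:ℝ)/x'⌋₊ := by
      rw [← hdig 0 (by omega)]; rfl
    have hfloorI : ⌊(N:ℝ)/x'⌋ = (i 0 : ℤ) := by
      rw [hi0, Int.natCast_floor_eq_floor hNx'_pos.le]
    set u := TN N x' with hu_def
    have hu_eq : u = (N:ℝ)/x' - (⌊(N:ℝ)/x'⌋ : ℝ) := rfl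
    have hu_irr : Irrational u := by
      rw [hu_eq]; exact hNx'_irr.sub_intCast _
    have hu_nonneg : 0 ≤ u := by
      rw [hu_eq]; have := Int.floor_le ((N:ℝ)/x'); linarith
    have hu_pos : 0 < u := lt_of_le_of_ne hu_nonneg (Ne.symm hu_irr.ne_zero)
    have hu_lt : u < 1 := by
      rw [hu_eq]; have := Int.lt_floor_add_one ((N:ℝ)/x'); linarith
    have hsum : (i 0 : ℝ) + u = (N:ℝ)/x' := by
      rw [hu_eq, hfloorI]; push_cast; ring
    have hx'_eq : x' = (N:ℝ) / ((i 0 : ℝ) + u) := by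
      rw [hsum, eq_div_iff (ne_of_gt hNx'_pos)]
      field_simp
    have hu_fund : u ∈ fund N n (fun k => i (k+1)) := by
      refine ⟨⟨hu_pos, hu_lt⟩, hu_irr, ?_⟩
      intro k hk
      rw [← digit_succ]
      exact hdig (k+1) (by omega)
    obtain ⟨hIoo, hirr, heq⟩ := ih (fun k => i (k+1)) u hu_fund
    have hit : (TN N)^[n+1] x' = (TN N)^[n] u := by
      rw [Function.iterate_succ_apply]
    refine ⟨by rw [hit]; exact hIoo, by rw [hit]; exact hirr, ?_⟩
    rw [hit, FF_succ, ← heq, ← hx'_eq]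

lemma set_eq (N : ℕ) (hN : 1 ≤ N) (n : ℕ) (i : ℕ → ℕ) (hi : ∀ k < n, N ≤ i k)
    (x : ℝ) (hx1 : x ≤ 1) :
    {x' ∈ fund N n i | (TN N)^[n] x' < x} = FF N n i '' {t ∈ Ioo (0:ℝ) x | Irrational t} := by
  ext x'
  constructor
  · rintro ⟨hf, hlt⟩
    obtain ⟨hIoo, hirr, heq⟩ := bwd N hN n i x' hf
    exact ⟨(TN N)^[n] x', ⟨⟨hIoo.1, hlt⟩, hirr⟩, heq.symm⟩
  · rintro ⟨t, ⟨⟨ht0, htx⟩, htirr⟩, rfl⟩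
    obtain ⟨hmem, hit⟩ := fwd N hN n i hi t ⟨ht0, lt_of_lt_of_le htx hx1⟩ htirr
    exact ⟨hmem, by rw [hit]; exact htx⟩

lemma fund_eq_set (N : ℕ) (hN : 1 ≤ N) (n : ℕ) (i : ℕ → ℕ) :
    fund N n i = {x' ∈ fund N n i | (TN N)^[n] x' < 1} := by
  ext x'
  refine ⟨fun h => ⟨h, (bwd N hN n i x' h).1.2⟩, fun h => h.1⟩

lemma vol_image (α β γ δ : ℝ) (hγ : 0 ≤ γ) (hδ : 1 ≤ δ) (he : α*δ - β*γ ≠ 0)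
    (x : ℝ) (hx0 : 0 ≤ x) (hx1 : x ≤ 1) :
    volume ((fun t => (α*t+β)/(γ*t+δ)) '' {t ∈ Ioo (0:ℝ) x | Irrational t})
      = ENNReal.ofReal |(α*x+β)/(γ*x+δ) - (α*0+β)/(γ*0+δ)| := by
  set f : ℝ → ℝ := fun t => (α*t+β)/(γ*t+δ) with hf_def
  have hden : ∀ t : ℝ, 0 ≤ t → 0 < γ*t+δ := fun t ht => by nlinarith
  have hdiff : ∀ s t : ℝ, 0 ≤ s → 0 ≤ t →
      f t - f s = (t-s)*(α*δ-β*γ)/((γ*t+δ)*(γ*s+δ)) := by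
    intro s t hs ht
    rw [hf_def]
    field_simp [(hden s hs).ne', (hden t ht).ne']
    ring
  have hcont : ContinuousOn f (Icc 0 x) := by
    apply ContinuousOn.div (by fun_prop) (by fun_prop)
    exact fun t ht => (hden t ht.1).ne'
  set S : Set ℝ := {t ∈ Ioo (0:ℝ) x | Irrational t} with hS_def
  have hScount : {t ∈ Ioo (0:ℝ) x | ¬Irrational t}.Countable := by
    apply Set.Countable.mono _ (Set.countable_range ((↑) : ℚ → ℝ))
    rintro t ⟨_, ht⟩
    exact not_not.mp ht
  rcases lt_or_gt_of_ne he with hneg | hpos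
  · -- strictly decreasing
    have hanti : StrictAntiOn f (Icc 0 x) := by
      intro s hs t ht hst
      have h := hdiff s t hs.1 ht.1
      have : f t - f s < 0 := by
        rw [h]
        apply div_neg_of_neg_of_pos
        · exact mul_neg_of_pos_of_neg (by linarith) hneg
        · exact mul_pos (hden t ht.1) (hden s hs.1)
      linarith
    have himg : f '' (Ioo 0 x) = Ioo (f x) (f 0) := by
      apply Subset.antisymm
      · rintro y ⟨t, ht, rfl⟩
        exact ⟨hanti ⟨ht.1.le, ht.2.le⟩ ⟨hx0, le_refl x⟩ ht.2, hanti ⟨le_refl 0, hx0⟩ ⟨ht.1.le, ht.2.le⟩ ht.1⟩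
      · exact intermediate_value_Ioo' hx0 hcont
    have hsub : f '' S ⊆ Ioo (f x) (f 0) := by
      rw [← himg]; exact image_mono (sep_subset _ _)
    have hdsub : Ioo (f x) (f 0) \ (f '' S) ⊆ f '' {t ∈ Ioo 0 x | ¬Irrational t} := by
      rintro y ⟨hy, hyn⟩
      rw [← himg] at hy
      obtain ⟨t, ht, rfl⟩ := hy
      refine ⟨t, ⟨ht, fun htirr => hyn ⟨t, ⟨ht, htirr⟩, rfl⟩⟩, rfl⟩
    have hvol : volume (f '' S) = volume (Ioo (f x) (f 0)) := by
      apply le_antisymm (measure_mono hsub)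
      calc volume (Ioo (f x) (f 0)) = volume (f '' S ∪ (Ioo (f x) (f 0) \ f '' S)) := by
            rw [union_diff_cancel hsub]
        _ ≤ volume (f '' S) + volume (Ioo (f x) (f 0) \ f '' S) := measure_union_le _ _
        _ ≤ volume (f '' S) + 0 := by
            gcongr
            exact le_of_eq (measure_mono_null hdsub ((hScount.image f).measure_zero volume))
        _ = volume (f '' S) := add_zero _
    rw [hvol, Real.volume_Ioo]
    congr 1
    have hle : f x ≤ f 0 := by
      rcases eq_or_lt_of_le hx0 with h | h
      · rw [← h]
      · exact (hanti ⟨le_refl 0, hx0⟩ ⟨hx0, le_refl x⟩ h).le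
    rw [abs_of_nonpos (by simpa [hf_def] using sub_nonpos.mpr hle)]
    ring
  · -- strictly increasing
    have hmono : StrictMonoOn f (Icc 0 x) := by
      intro s hs t ht hst
      have h := hdiff s t hs.1 ht.1
      have : 0 < f t - f s := by
        rw [h]
        apply div_pos (mul_pos (by linarith) hpos) (mul_pos (hden t ht.1) (hden s hs.1))
      linarith
    have himg : f '' (Ioo 0 x) = Ioo (f 0) (f x) := by
      apply Subset.antisymm
      · rintro y ⟨t, ht, rfl⟩
        exact ⟨hmono ⟨le_refl 0, hx0⟩ ⟨ht.1.le, ht.2.le⟩ ht.1, hmono ⟨ht.1.le, ht.2.le⟩ ⟨hx0, le_refl x⟩ ht.2⟩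
      · exact intermediate_value_Ioo hx0 hcont
    have hsub : f '' S ⊆ Ioo (f 0) (f x) := by
      rw [← himg]; exact image_mono (sep_subset _ _)
    have hdsub : Ioo (f 0) (f x) \ (f '' S) ⊆ f '' {t ∈ Ioo 0 x | ¬Irrational t} := by
      rintro y ⟨hy, hyn⟩
      rw [← himg] at hy
      obtain ⟨t, ht, rfl⟩ := hy
      refine ⟨t, ⟨ht, fun htirr => hyn ⟨t, ⟨ht, htirr⟩, rfl⟩⟩, rfl⟩
    have hvol : volume (f '' S) = volume (Ioo (f 0) (f x)) := by
      apply le_antisymm (measure_mono hsub)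
      calc volume (Ioo (f 0) (f x)) = volume (f '' S ∪ (Ioo (f 0) (f x) \ f '' S)) := by
            rw [union_diff_cancel hsub]
        _ ≤ volume (f '' S) + volume (Ioo (f 0) (f x) \ f '' S) := measure_union_le _ _
        _ ≤ volume (f '' S) + 0 := by
            gcongr
            exact le_of_eq (measure_mono_null hdsub ((hScount.image f).measure_zero volume))
        _ = volume (f '' S) := add_zero _
    rw [hvol, Real.volume_Ioo]
    congr 1
    have hle : f 0 ≤ f x := by
      rcases eq_or_lt_of_le hx0 with h | h
      · rw [← h]
      · exact (hmono ⟨le_refl 0, hx0⟩ ⟨hx0, le_refl x⟩ h).le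
    rw [abs_of_nonneg (by simpa [hf_def] using sub_nonneg.mpr hle)]

lemma final_alg (Nr α β γ δ x : ℝ) (hN : 1 ≤ Nr) (hγ : 0 ≤ γ) (hδ : 1 ≤ δ)
    (hx0 : 0 ≤ x) :
    |(α*x+β)/(γ*x+δ) - (α*0+β)/(γ*0+δ)| =
      |(α*1+β)/(γ*1+δ) - (α*0+β)/(γ*0+δ)| * ((Nr*γ/δ + Nr) * x / (Nr*γ/δ * x + Nr)) := by
  have hδ0 : (0:ℝ) < δ := by linarith
  have hdx : (0:ℝ) < γ*x+δ := by nlinarith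
  have hd1 : (0:ℝ) < γ*1+δ := by nlinarith
  have hs : (0:ℝ) ≤ Nr*γ/δ*x := mul_nonneg (div_nonneg (mul_nonneg (by linarith) hγ) hδ0.le) hx0
  have h2 : (0:ℝ) < Nr*γ/δ*x + Nr := by linarith
  have hd0 : γ*(0:ℝ)+δ = δ := by ring
  have hfx : (α*x+β)/(γ*x+δ) - (α*0+β)/(γ*0+δ) = x*(α*δ-β*γ)/((γ*x+δ)*δ) := by
    rw [hd0]
    field_simp
    ring
  have hf1 : (α*1+β)/(γ*1+δ) - (α*0+β)/(γ*0+δ) = 1*(α*δ-β*γ)/((γ*1+δ)*δ) := by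
    rw [hd0]
    field_simp
    ring
  have h3 : |x * (α*δ-β*γ) / ((γ*x+δ)*δ)| = x * |α*δ-β*γ| / ((γ*x+δ)*δ) := by
    rw [abs_div, abs_mul, abs_of_nonneg hx0, abs_of_nonneg (mul_pos hdx hδ0).le]
  have h4 : |1 * (α*δ-β*γ) / ((γ*1+δ)*δ)| = 1 * |α*δ-β*γ| / ((γ*1+δ)*δ) := by
    rw [abs_div, abs_mul, abs_of_nonneg (zero_le_one (α := ℝ)), abs_of_nonneg (mul_pos hd1 hδ0).le]
  rw [hfx, hf1, h3, h4]
  rw [div_mul_div_comm, div_eq_div_iff (by positivity) (by positivity)]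
  field_simp

/-- Brodén–Borel–Lévy formula: for `n ≥ 1`, digits `i_1,…,i_n ≥ N` and `x ∈ I`,
`λ({x' ∈ I_N(i_1,…,i_n) : T_N^n(x') < x}) = λ(I_N(i_1,…,i_n)) (s_n+N)x/(s_n x+N)`,
where `s_n = [i_n, i_{n-1}, …, i_1]_N`. -/
theorem broden_borel_levy (N : ℕ) (hN : 1 ≤ N) (n : ℕ) (hn : 1 ≤ n)
    (i : ℕ → ℕ) (hi : ∀ k < n, N ≤ i k) (x : ℝ) (hx : x ∈ Icc (0:ℝ) 1) :
    (volume {x' ∈ fund N n i | (TN N)^[n] x' < x}).toReal =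
      (volume (fund N n i)).toReal *
        ((cfVal N (fun k => i (n - 1 - k)) n + N) * x
          / (cfVal N (fun k => i (n - 1 - k)) n * x + N)) := by
  have hi' : ∀ k < n, 1 ≤ i k := fun k hk => le_trans hN (hi k hk)
  obtain ⟨ha, hb, hc, hd⟩ := mat_nonneg N hN n i hi'
  have hγR : (0:ℝ) ≤ ((mat N n i).2.2.1 : ℝ) := by exact_mod_cast hc
  have hδR : (1:ℝ) ≤ ((mat N n i).2.2.2 : ℝ) := by exact_mod_cast hd
  have hNR : (1:ℝ) ≤ (N:ℝ) := by exact_mod_cast hN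
  have hdet : ((mat N n i).1 : ℝ) * ((mat N n i).2.2.2 : ℝ)
      - ((mat N n i).2.1 : ℝ) * ((mat N n i).2.2.1 : ℝ) = (-(N:ℝ))^n := by
    have h := mat_det N n i
    have := congrArg (Int.cast : ℤ → ℝ) h
    push_cast at this
    convert this using 2
  have hdetne : ((mat N n i).1 : ℝ) * ((mat N n i).2.2.2 : ℝ)
      - ((mat N n i).2.1 : ℝ) * ((mat N n i).2.2.1 : ℝ) ≠ 0 := by
    rw [hdet]
    apply pow_ne_zero
    simp only [neg_ne_zero, Nat.cast_ne_zero]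
    omega
  have hFFf : ∀ x0 : ℝ, x0 ≤ 1 →
      volume {x' ∈ fund N n i | (TN N)^[n] x' < x0}
        = volume ((fun t => (((mat N n i).1 : ℝ)*t + ((mat N n i).2.1 : ℝ))
            / (((mat N n i).2.2.1 : ℝ)*t + ((mat N n i).2.2.2 : ℝ))) ''
              {t ∈ Ioo (0:ℝ) x0 | Irrational t}) := by
    intro x0 hx0
    rw [set_eq N hN n i hi x0 hx0]
    congr 1
    apply image_congr
    intro t ht
    exact FF_eq N hN n i hi' t ht.1.1.le
  have hvolx := (hFFf x hx.2).trans
    (vol_image _ _ _ _ hγR hδR hdetne x hx.1 hx.2)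
  have hvol1 : volume (fund N n i) = ENNReal.ofReal
      |(((mat N n i).1 : ℝ)*1 + ((mat N n i).2.1 : ℝ))
          / (((mat N n i).2.2.1 : ℝ)*1 + ((mat N n i).2.2.2 : ℝ))
        - (((mat N n i).1 : ℝ)*0 + ((mat N n i).2.1 : ℝ))
          / (((mat N n i).2.2.1 : ℝ)*0 + ((mat N n i).2.2.2 : ℝ))| := by
    rw [fund_eq_set N hN n i]
    exact (hFFf 1 le_rfl).trans
      (vol_image _ _ _ _ hγR hδR hdetne 1 zero_le_one le_rfl)
  rw [hvolx, hvol1, ENNReal.toReal_ofReal (abs_nonneg _), ENNReal.toReal_ofReal (abs_nonneg _)]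
  rw [cfVal_rev N hN n i hi']
  exact final_alg (N:ℝ) _ _ _ _ x hNR hγR hδR hx.1
end

section
/- For every integer i ≥ N, the fundamental interval of rank one satisfies I_N(i) = (N/(i+1), N/i) ∖ ℚ, so λ(a_1 = i) = N/(i(i+1)); moreover, for every n ≥ 1, all integers i_1,…,i_n ≥ N and every integer i ≥ N, λ({x ∈ I_N(i_1,…,i_n) : a_{n+1}(x) = i}) = V_{N,i}(s_n)·λ(I_N(i_1,…,i_n)), where V_{N,i}(s) = (s+N)/((s+i)(s+i+1)) and s_n = [i_n, i_{n−1}, …, i_1]_N. -/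
open MeasureTheory Set Filter
open scoped Classical Topology ENNReal

namespace NCF

/-- Möbius composition `[i0, i1, …, i_{n-1} + …]` with free tail `x`. -/
noncomputable def mob (N : ℕ) : (ℕ → ℕ) → ℕ → ℝ → ℝ
  | _, 0, x => x
  | i, (n+1), x => (N : ℝ) / ((i 0 : ℝ) + mob N (fun k => i (k+1)) n x)

/-- Coefficients `(A,B,C,D)` so that `mob N i n x = (A + Bx)/(C + Dx)`. -/
def CC (N : ℕ) : (ℕ → ℕ) → ℕ → ℕ × ℕ × ℕ × ℕ
  | _, 0 => (0, 1, 1, 0)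
  | i, (n+1) =>
    let p := CC N (fun k => i (k+1)) n
    (N * p.2.2.1, N * p.2.2.2, i 0 * p.2.2.1 + p.1, i 0 * p.2.2.2 + p.2.1)

variable {N : ℕ}

lemma mob_zero (i : ℕ → ℕ) (x : ℝ) : mob N i 0 x = x := rfl

lemma mob_succ (i : ℕ → ℕ) (n : ℕ) (x : ℝ) :
    mob N i (n+1) x = (N : ℝ) / ((i 0 : ℝ) + mob N (fun k => i (k+1)) n x) := rfl

lemma CA (i : ℕ → ℕ) (n : ℕ) : (CC N i (n+1)).1 = N * (CC N (fun k => i (k+1)) n).2.2.1 := rfl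
lemma CB (i : ℕ → ℕ) (n : ℕ) : (CC N i (n+1)).2.1 = N * (CC N (fun k => i (k+1)) n).2.2.2 := rfl
lemma CCc (i : ℕ → ℕ) (n : ℕ) : (CC N i (n+1)).2.2.1
    = i 0 * (CC N (fun k => i (k+1)) n).2.2.1 + (CC N (fun k => i (k+1)) n).1 := rfl
lemma CD (i : ℕ → ℕ) (n : ℕ) : (CC N i (n+1)).2.2.2
    = i 0 * (CC N (fun k => i (k+1)) n).2.2.2 + (CC N (fun k => i (k+1)) n).2.1 := rfl

lemma mob_congr : ∀ (n : ℕ) (i i' : ℕ → ℕ), (∀ k < n, i k = i' k) → ∀ x, mob N i n x = mob N i' n x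
  | 0, _, _, _, _ => rfl
  | (n+1), i, i', h, x => by
      rw [mob_succ, mob_succ, h 0 (Nat.succ_pos _),
        mob_congr n (fun k => i (k+1)) (fun k => i' (k+1)) (fun k hk => h (k+1) (by omega)) x]

lemma mob_nonneg : ∀ (n : ℕ) (i : ℕ → ℕ) (x : ℝ), 0 ≤ x → 0 ≤ mob N i n x
  | 0, _, _, hx => hx
  | (n+1), i, x, hx => by
      rw [mob_succ]
      have := mob_nonneg n (fun k => i (k+1)) x hx
      positivity

lemma mob_back : ∀ (n : ℕ) (i : ℕ → ℕ) (x : ℝ),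
    mob N i (n+1) x = mob N i n ((N : ℝ) / ((i n : ℝ) + x))
  | 0, i, x => rfl
  | (n+1), i, x => by
      rw [mob_succ, mob_back n (fun k => i (k+1)) x, ← mob_succ]

lemma C_pos : ∀ (n : ℕ) (i : ℕ → ℕ), (∀ k < n, 1 ≤ i k) → 1 ≤ (CC N i n).2.2.1
  | 0, _, _ => le_refl 1
  | (n+1), i, h => by
      have := C_pos n (fun k => i (k+1)) (fun k hk => h (k+1) (by omega))
      have h0 := h 0 (Nat.succ_pos _)
      rw [CCc]
      exact le_trans (by nlinarith) (Nat.le_add_right _ _)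

lemma det_CC : ∀ (n : ℕ) (i : ℕ → ℕ),
    ((CC N i n).2.1 : ℤ) * (CC N i n).2.2.1 - (CC N i n).1 * (CC N i n).2.2.2 = (-(N:ℤ))^n
  | 0, _ => by simp [CC]
  | (n+1), i => by
      have := det_CC n (fun k => i (k+1))
      rw [CA, CB, CCc, CD]
      push_cast
      rw [pow_succ]
      linear_combination (-(N:ℤ)) * this

lemma DB_CC : ∀ (n : ℕ) (i : ℕ → ℕ),
    (CC N i (n+1)).2.2.2 = (CC N i n).2.2.1 ∧ (CC N i (n+1)).2.1 = (CC N i n).1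
  | 0, i => by simp [CC]
  | (n+1), i => by
      have h := DB_CC n (fun k => i (k+1))
      refine ⟨?_, ?_⟩
      · rw [CD i (n+1), CCc i n, h.1, h.2]
      · rw [CB i (n+1), CA i n, h.1]

lemma backrec_CC : ∀ (n : ℕ) (i : ℕ → ℕ),
    (CC N i (n+1)).2.2.1 = i n * (CC N i n).2.2.1 + N * (CC N i n).2.2.2 ∧
    (CC N i (n+1)).1 = i n * (CC N i n).1 + N * (CC N i n).2.1
  | 0, i => by simp [CC]
  | (n+1), i => by
      have h := backrec_CC n (fun k => i (k+1))
      refine ⟨?_, ?_⟩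
      · rw [CCc i (n+1), h.1, h.2, CCc i n, CD i n]; ring
      · rw [CA i (n+1), h.1, CA i n, CB i n]; ring

lemma mob_eq : ∀ (n : ℕ) (i : ℕ → ℕ), (∀ k < n, 1 ≤ i k) → ∀ x : ℝ, 0 ≤ x →
    mob N i n x = (((CC N i n).1 : ℝ) + (CC N i n).2.1 * x) /
      ((CC N i n).2.2.1 + (CC N i n).2.2.2 * x)
  | 0, _, _, x, _ => by simp [mob, CC]
  | (n+1), i, h, x, hx => by
      set i' := fun k => i (k+1) with hi'
      have ih := mob_eq n i' (fun k hk => h (k+1) (by omega)) x hx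
      have hC : (1:ℝ) ≤ ((CC N i' n).2.2.1 : ℝ) := by
        exact_mod_cast C_pos n i' (fun k hk => h (k+1) (by omega))
      have hD : (0:ℝ) ≤ ((CC N i' n).2.2.2 : ℝ) := by positivity
      have hden : (0:ℝ) < ((CC N i' n).2.2.1 : ℝ) + (CC N i' n).2.2.2 * x := by nlinarith
      have hmnn : 0 ≤ mob N i' n x := mob_nonneg n i' x hx
      have h0 : (1:ℝ) ≤ (i 0 : ℝ) := by exact_mod_cast h 0 (Nat.succ_pos _)
      have hden2 : (0:ℝ) < (i 0 : ℝ) + mob N i' n x := by linarith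
      have hA : (0:ℝ) ≤ ((CC N i' n).1 : ℝ) := by positivity
      have hB : (0:ℝ) ≤ ((CC N i' n).2.1 : ℝ) := by positivity
      have hden3 : (0:ℝ) < ((i 0 : ℝ) * (CC N i' n).2.2.1 + (CC N i' n).1)
          + ((i 0 : ℝ) * (CC N i' n).2.2.2 + (CC N i' n).2.1) * x := by nlinarith
      rw [ih] at hden2
      rw [mob_succ, ← hi', ih, CA, CB, CCc, CD]
      push_cast
      rw [div_eq_div_iff hden2.ne' hden3.ne']
      field_simp
      ring


lemma cfVal_nonneg : ∀ (d : ℕ) (ℓ : ℕ → ℕ), 0 ≤ cfVal N ℓ d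
  | 0, _ => le_refl 0
  | (d+1), ℓ => by
      have := cfVal_nonneg d (fun k => ℓ (k+1))
      show (0:ℝ) ≤ (N : ℝ) / ((ℓ 0 : ℝ) + cfVal N (fun k => ℓ (k+1)) d)
      positivity

lemma mirror : ∀ (n : ℕ) (i : ℕ → ℕ), (∀ k < n, 1 ≤ i k) →
    cfVal N (fun k => i (n - 1 - k)) n * ((CC N i n).2.2.1 : ℝ) = (N : ℝ) * (CC N i n).2.2.2
  | 0, i, _ => by simp [cfVal, CC]
  | (n+1), i, h => by
      have ih := mirror n i (fun k hk => h k (by omega))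
      have hs : 0 ≤ cfVal N (fun k => i (n - 1 - k)) n := cfVal_nonneg n _
      have hin : (1:ℝ) ≤ (i n : ℝ) := by exact_mod_cast h n (by omega)
      have hfun : (fun k => i (n + 1 - 1 - (k+1))) = (fun k => i (n - 1 - k)) := by
        funext k; congr 1; omega
      have hstep : cfVal N (fun k => i (n + 1 - 1 - k)) (n+1)
          = (N : ℝ) / ((i n : ℝ) + cfVal N (fun k => i (n - 1 - k)) n) := by
        show (N : ℝ) / ((i n : ℝ) + cfVal N (fun k => i (n + 1 - 1 - (k+1))) n) = _
        rw [hfun]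
      have hpos : (0:ℝ) < (i n : ℝ) + cfVal N (fun k => i (n - 1 - k)) n := by linarith
      rw [hstep, (backrec_CC n i).1, (DB_CC n i).1]
      push_cast
      have key : ((i n : ℝ) * (CC N i n).2.2.1 + (N:ℝ) * (CC N i n).2.2.2)
          = ((i n : ℝ) + cfVal N (fun k => i (n - 1 - k)) n) * ((CC N i n).2.2.1 : ℝ) := by
        rw [← ih]; ring
      rw [key, ← mul_assoc, div_mul_cancel₀ _ hpos.ne']

lemma irr_natCast_div (hN : N ≠ 0) {x : ℝ} (hx : Irrational x) : Irrational ((N : ℝ) / x) := by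
  have hx0 : x ≠ 0 := by rintro rfl; exact hx ⟨0, by norm_num⟩
  rintro ⟨q, hq⟩
  have hq0 : (q : ℝ) ≠ 0 := by
    rw [hq]; exact div_ne_zero (Nat.cast_ne_zero.2 hN) hx0
  have hq0' : q ≠ 0 := by exact_mod_cast hq0
  apply hx
  refine ⟨(N : ℚ) / q, ?_⟩
  push_cast
  rw [div_eq_iff hq0]
  rw [eq_comm, div_eq_iff hx0] at hq
  linarith [hq]

lemma vol_Ioo_diff (a b : ℝ) :
    volume (Ioo a b \ Set.range ((↑) : ℚ → ℝ)) = ENNReal.ofReal (b - a) := by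
  rw [measure_diff_null ((Set.countable_range _).measure_zero _), Real.volume_Ioo]

lemma image_g (hN : 1 ≤ N) (a : ℕ) (ha : 1 ≤ a) {m M : ℝ} (hm : 0 ≤ m) (hmM : m ≤ M) :
    (fun y => (N:ℝ)/((a:ℝ)+y)) '' (Ioo m M \ Set.range ((↑) : ℚ → ℝ)) =
      Ioo ((N:ℝ)/((a:ℝ)+M)) ((N:ℝ)/((a:ℝ)+m)) \ Set.range ((↑) : ℚ → ℝ) := by
  have hNpos : (0:ℝ) < N := by exact_mod_cast hN
  have hapos : (0:ℝ) < a := by exact_mod_cast ha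
  ext c
  constructor
  · rintro ⟨y, ⟨⟨hy1, hy2⟩, hyq⟩, rfl⟩
    have hay : 0 < (a:ℝ) + y := by linarith
    refine ⟨⟨?_, ?_⟩, ?_⟩
    · exact div_lt_div_of_pos_left hNpos hay (by linarith)
    · exact div_lt_div_of_pos_left hNpos (by linarith) (by linarith)
    · exact irr_natCast_div (by omega) (Irrational.natCast_add (show Irrational y from hyq) a)
  · rintro ⟨⟨hc1, hc2⟩, hcq⟩
    have ham : (0:ℝ) < (a:ℝ) + m := by linarith
    have haM : (0:ℝ) < (a:ℝ) + M := by linarith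
    have hc0 : 0 < c := lt_trans (div_pos hNpos haM) hc1
    have h1 : (a:ℝ) + m < (N:ℝ)/c := by
      rw [lt_div_iff₀ hc0]
      rw [lt_div_iff₀ ham] at hc2
      linarith
    have h2 : (N:ℝ)/c < (a:ℝ) + M := by
      rw [div_lt_iff₀ hc0]
      rw [div_lt_iff₀ haM] at hc1
      linarith
    refine ⟨(N:ℝ)/c - a, ⟨⟨by linarith, by linarith⟩, ?_⟩, ?_⟩
    · rintro ⟨q, hq⟩
      apply hcq
      have hNc : (N:ℝ)/c = (a:ℝ) + q := by linarith [hq]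
      have haq : (0:ℝ) < (a:ℝ) + (q:ℝ) := by
        rw [← hNc]; positivity
      have hceq : c = (N:ℝ)/((a:ℝ)+(q:ℝ)) := by
        rw [← hNc, div_div_eq_mul_div, mul_comm, mul_div_assoc,
          div_self hNpos.ne', mul_one]
      refine ⟨(N:ℚ)/((a:ℚ)+q), ?_⟩
      push_cast
      exact hceq.symm
    · show (N:ℝ)/((a:ℝ) + ((N:ℝ)/c - a)) = c
      have h3 : (a:ℝ) + ((N:ℝ)/c - a) = (N:ℝ)/c := by ring
      rw [h3, div_div_eq_mul_div, mul_comm, mul_div_assoc, div_self hNpos.ne', mul_one]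

lemma digit_succ (x : ℝ) (k : ℕ) : digit N x (k+1) = digit N (TN N x) k := by
  simp [digit, Function.iterate_succ_apply]


lemma fund_succ (hN : 1 ≤ N) (n : ℕ) (i : ℕ → ℕ) (hi : N ≤ i 0) :
    fund N (n+1) i = (fun y => (N:ℝ)/((i 0 : ℝ)+y)) '' fund N n (fun k => i (k+1)) := by
  have hNpos : (0:ℝ) < N := by exact_mod_cast hN
  have hi0 : (1:ℝ) ≤ (i 0 : ℝ) := by
    have : 1 ≤ i 0 := le_trans hN hi
    exact_mod_cast this
  have hiN : (N:ℝ) ≤ (i 0 : ℝ) := by exact_mod_cast hi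
  ext x
  simp only [fund, mem_setOf_eq, mem_image, mem_Ioo]
  constructor
  · rintro ⟨⟨hx0, hx1⟩, hxirr, hdig⟩
    have hxne : x ≠ 0 := ne_of_gt hx0
    have hNx : Irrational ((N:ℝ)/x) := irr_natCast_div (by omega) hxirr
    have hNxpos : 0 < (N:ℝ)/x := by positivity
    have hfl : ⌊(N:ℝ)/x⌋ = (i 0 : ℤ) := by
      have h1 := hdig 0 (Nat.succ_pos n)
      have h2 : digit N x 0 = ⌊(N:ℝ)/x⌋₊ := by simp [digit]
      rw [h2, ← Int.floor_toNat] at h1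
      have h3 : 0 ≤ ⌊(N:ℝ)/x⌋ := Int.floor_nonneg.2 hNxpos.le
      omega
    set y := TN N x with hy
    have hyval : y = (N:ℝ)/x - (i 0 : ℝ) := by
      rw [hy]; show (N:ℝ)/x - (⌊(N:ℝ)/x⌋ : ℝ) = _; rw [hfl]; push_cast; ring
    have hy0 : 0 ≤ y := Int.fract_nonneg ((N:ℝ)/x)
    have hy1 : y < 1 := Int.fract_lt_one ((N:ℝ)/x)
    have hyirr : Irrational y := by rw [hyval]; exact Irrational.sub_natCast hNx (i 0)
    have hyne : y ≠ 0 := by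
      intro h0; exact hyirr ⟨0, by rw [h0]; norm_num⟩
    have hsum : (i 0 : ℝ) + y = (N:ℝ)/x := by rw [hyval]; ring
    refine ⟨y, ⟨⟨lt_of_le_of_ne hy0 (Ne.symm hyne), hy1⟩, hyirr, fun k hk => ?_⟩, ?_⟩
    · rw [← digit_succ]; exact hdig (k+1) (by omega)
    · show (N:ℝ)/((i 0 : ℝ) + y) = x
      rw [hsum, div_div_eq_mul_div, mul_comm, mul_div_assoc, div_self hNpos.ne', mul_one]
  · rintro ⟨y, ⟨⟨hy0, hy1⟩, hyirr, hydig⟩, rfl⟩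
    have hden : (0:ℝ) < (i 0 : ℝ) + y := by linarith
    have hx0 : 0 < (N:ℝ)/((i 0:ℝ)+y) := by positivity
    have hx1 : (N:ℝ)/((i 0:ℝ)+y) < 1 := (div_lt_one hden).2 (by linarith)
    have hxirr : Irrational ((N:ℝ)/((i 0:ℝ)+y)) :=
      irr_natCast_div (by omega) (Irrational.natCast_add hyirr (i 0))
    have hNx : (N:ℝ)/((N:ℝ)/((i 0:ℝ)+y)) = (i 0:ℝ) + y := by
      rw [div_div_eq_mul_div, mul_comm, mul_div_assoc, div_self hNpos.ne', mul_one]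
    have hTN : TN N ((N:ℝ)/((i 0:ℝ)+y)) = y := by
      show (N:ℝ)/((N:ℝ)/((i 0:ℝ)+y)) - (⌊(N:ℝ)/((N:ℝ)/((i 0:ℝ)+y))⌋ : ℝ) = y
      rw [hNx]
      have : ⌊(i 0:ℝ) + y⌋ = (i 0 : ℤ) := by
        rw [Int.floor_eq_iff]
        constructor
        · push_cast; linarith
        · push_cast; linarith
      rw [this]; push_cast; ring
    refine ⟨⟨hx0, hx1⟩, hxirr, fun k hk => ?_⟩
    rcases Nat.eq_zero_or_pos k with rfl | hkpos
    · show ⌊(N:ℝ)/((N:ℝ)/((i 0:ℝ)+y))⌋₊ = i 0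
      rw [hNx, Nat.floor_eq_iff (by positivity)]
      constructor
      · linarith
      · push_cast; linarith
    · obtain ⟨k', rfl⟩ := Nat.exists_eq_succ_of_ne_zero hkpos.ne'
      rw [digit_succ, hTN]
      exact hydig k' (by omega)

lemma fund_interval (hN : 1 ≤ N) : ∀ (n : ℕ) (i : ℕ → ℕ), (∀ k < n, N ≤ i k) →
    fund N n i = Ioo (min (mob N i n 0) (mob N i n 1)) (max (mob N i n 0) (mob N i n 1))
      \ Set.range ((↑) : ℚ → ℝ)
  | 0, i, _ => by
      rw [show mob N i 0 (0:ℝ) = 0 from rfl, show mob N i 0 (1:ℝ) = 1 from rfl]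
      norm_num
      ext x
      simp only [fund, mem_setOf_eq, mem_diff, mem_Ioo]
      constructor
      · rintro ⟨h1, h2, -⟩; exact ⟨h1, h2⟩
      · rintro ⟨h1, h2⟩; exact ⟨h1, h2, fun k hk => absurd hk (Nat.not_lt_zero k)⟩
  | (n+1), i, h => by
      have h' : ∀ k < n, N ≤ i (k+1) := fun k hk => h (k+1) (by omega)
      rw [fund_succ hN n i (h 0 (Nat.succ_pos _)),
        fund_interval hN n (fun k => i (k+1)) h']
      have hu : 0 ≤ mob N (fun k => i (k+1)) n 0 := mob_nonneg n _ 0 le_rfl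
      have hv : 0 ≤ mob N (fun k => i (k+1)) n 1 := mob_nonneg n _ 1 zero_le_one
      set u := mob N (fun k => i (k+1)) n 0 with hu'
      set v := mob N (fun k => i (k+1)) n 1 with hv'
      have ha : 1 ≤ i 0 := le_trans hN (h 0 (Nat.succ_pos _))
      rw [image_g hN (i 0) ha (le_min hu hv) min_le_max]
      have e0 : mob N i (n+1) 0 = (N:ℝ)/((i 0:ℝ) + u) := by rw [mob_succ, ← hu']
      have e1 : mob N i (n+1) 1 = (N:ℝ)/((i 0:ℝ) + v) := by rw [mob_succ, ← hv']
      have hNpos : (0:ℝ) < N := by exact_mod_cast hN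
      have hi0 : (0:ℝ) < (i 0 : ℝ) := by exact_mod_cast ha
      rcases le_total u v with huv | huv
      · have hle : (N:ℝ)/((i 0:ℝ)+v) ≤ (N:ℝ)/((i 0:ℝ)+u) := by
          gcongr
        rw [min_eq_left huv, max_eq_right huv, e0, e1, min_eq_right hle, max_eq_left hle]
      · have hle : (N:ℝ)/((i 0:ℝ)+u) ≤ (N:ℝ)/((i 0:ℝ)+v) := by
          gcongr
        rw [min_eq_right huv, max_eq_left huv, e0, e1, min_eq_left hle, max_eq_right hle]


lemma vol_fund (hN : 1 ≤ N) (n : ℕ) (i : ℕ → ℕ) (hi : ∀ k < n, N ≤ i k) :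
    (volume (fund N n i)).toReal = |mob N i n 1 - mob N i n 0| := by
  rw [fund_interval hN n i hi, vol_Ioo_diff,
    ENNReal.toReal_ofReal (sub_nonneg.2 min_le_max), max_sub_min_eq_abs]

lemma mob_sub (n : ℕ) (i : ℕ → ℕ) (hi : ∀ k < n, 1 ≤ i k) {u v : ℝ} (hu : 0 ≤ u) (hv : 0 ≤ v) :
    mob N i n u - mob N i n v = (u - v) * (-(N:ℝ))^n /
      (((((CC N i n).2.2.1 : ℝ)) + ((CC N i n).2.2.2 : ℝ) * u) *
        ((((CC N i n).2.2.1 : ℝ)) + ((CC N i n).2.2.2 : ℝ) * v)) := by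
  have hdet : (((CC N i n).2.1 : ℝ)) * (CC N i n).2.2.1 - ((CC N i n).1 : ℝ) * (CC N i n).2.2.2
      = (-(N:ℝ))^n := by
    have := det_CC (N := N) n i
    have h2 : ((((CC N i n).2.1 : ℤ) * (CC N i n).2.2.1 - (CC N i n).1 * (CC N i n).2.2.2 : ℤ) : ℝ)
        = (((-(N:ℤ))^n : ℤ) : ℝ) := by rw [this]
    push_cast at h2
    exact h2
  have hc : (1:ℝ) ≤ ((CC N i n).2.2.1 : ℝ) := by exact_mod_cast C_pos n i hi
  have hd : (0:ℝ) ≤ ((CC N i n).2.2.2 : ℝ) := by positivity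
  have hP1 : (0:ℝ) < (((CC N i n).2.2.1 : ℝ)) + ((CC N i n).2.2.2 : ℝ) * u := by nlinarith
  have hP2 : (0:ℝ) < (((CC N i n).2.2.1 : ℝ)) + ((CC N i n).2.2.2 : ℝ) * v := by nlinarith
  rw [mob_eq n i hi u hu, mob_eq n i hi v hv, div_sub_div _ _ hP1.ne' hP2.ne']
  congr 1
  linear_combination (u - v) * hdet

lemma abs_mob_aux (N n : ℕ) {t P : ℝ} (ht : 0 ≤ t) (hP : 0 < P) :
    |t * (-(N:ℝ))^n / P| = t * (N:ℝ)^n / P := by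
  rw [abs_div, abs_mul, abs_pow, abs_neg, Nat.abs_cast, abs_of_nonneg ht, abs_of_pos hP]

lemma final_algebra (N n : ℕ) (hN : (1:ℝ) ≤ (N:ℝ)) {c d s jj : ℝ} (hc : 1 ≤ c) (hd : 0 ≤ d)
    (hj : 1 ≤ jj) (hsc : s * c = (N:ℝ) * d) :
    ((N:ℝ)/(jj+0) - (N:ℝ)/(jj+1)) * (N:ℝ)^n / ((c + d*((N:ℝ)/(jj+0))) * (c + d*((N:ℝ)/(jj+1))))
      = (s + (N:ℝ))/((s+jj)*(s+jj+1)) * ((1-0) * (N:ℝ)^n / ((c + d*1)*(c + d*0))) := by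
  have hc0 : (0:ℝ) < c := by linarith
  have hjj : (0:ℝ) < jj := by linarith
  have h1 : (0:ℝ) < jj + 1 := by linarith
  have hNp : (0:ℝ) < (N:ℝ) := by linarith
  have hs' : s = (N:ℝ)*d/c := by rw [eq_div_iff hc0.ne']; linarith [hsc]
  subst hs'
  have hP0 : (0:ℝ) < c + d*((N:ℝ)/(jj+0)) := by positivity
  have hP1 : (0:ℝ) < c + d*((N:ℝ)/(jj+1)) := by positivity
  have hQ0 : (0:ℝ) < (N:ℝ)*d/c + jj := by positivity
  have hQ1 : (0:ℝ) < (N:ℝ)*d/c + jj + 1 := by positivity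
  field_simp
  ring

end NCF


open NCF in
/-- Rank-one fundamental intervals and conditional digit probabilities:
`I_N(i) = (N/(i+1), N/i) ∖ ℚ`, hence `λ(a_1 = i) = N/(i(i+1))`; and for digits
`i_1,…,i_n ≥ N` and `i ≥ N`,
`λ({x ∈ I_N(i_1,…,i_n) : a_{n+1}(x) = i}) = V_{N,i}(s_n) λ(I_N(i_1,…,i_n))`
with `V_{N,i}(s) = (s+N)/((s+i)(s+i+1))` and `s_n = [i_n,…,i_1]_N`. -/
theorem digit_probabilities (N : ℕ) (hN : 1 ≤ N) :
    (∀ i : ℕ, N ≤ i →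
      fund N 1 (fun _ => i) = Ioo ((N : ℝ)/(i+1)) ((N : ℝ)/i) \ (Set.range ((↑) : ℚ → ℝ)) ∧
      (volume (fund N 1 (fun _ => i))).toReal = (N : ℝ) / (i * (i+1))) ∧
    ∀ n : ℕ, 1 ≤ n → ∀ i : ℕ → ℕ, (∀ k < n, N ≤ i k) → ∀ j : ℕ, N ≤ j →
      (volume {x ∈ fund N n i | digit N x n = j}).toReal =
        (cfVal N (fun k => i (n - 1 - k)) n + N)
          / ((cfVal N (fun k => i (n - 1 - k)) n + j) * (cfVal N (fun k => i (n - 1 - k)) n + j + 1))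
          * (volume (fund N n i)).toReal := by
  have hNR : (1:ℝ) ≤ (N:ℝ) := by exact_mod_cast hN
  constructor
  · intro i hi
    have hi1 : (1:ℝ) ≤ (i:ℝ) := by exact_mod_cast le_trans hN hi
    have m0 : mob N (fun _ => i) 1 0 = (N:ℝ)/(i:ℝ) := by
      rw [mob_succ, mob_zero, add_zero]
    have m1 : mob N (fun _ => i) 1 1 = (N:ℝ)/((i:ℝ)+1) := by
      rw [mob_succ, mob_zero]
    have hle : (N:ℝ)/((i:ℝ)+1) ≤ (N:ℝ)/(i:ℝ) := by
      rw [div_le_div_iff₀ (by linarith) (by linarith)]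
      nlinarith
    have hset : fund N 1 (fun _ => i)
        = Ioo ((N:ℝ)/((i:ℝ)+1)) ((N:ℝ)/(i:ℝ)) \ Set.range ((↑) : ℚ → ℝ) := by
      rw [fund_interval hN 1 (fun _ => i) (fun k _ => hi), m0, m1,
        min_eq_right hle, max_eq_left hle]
    refine ⟨hset, ?_⟩
    rw [hset, vol_Ioo_diff, ENNReal.toReal_ofReal (by linarith)]
    have hi0 : (i:ℝ) ≠ 0 := by linarith
    have hi0' : (i:ℝ) + 1 ≠ 0 := by linarith
    field_simp
    ring
  · intro n hn i hi j hj
    have hi1 : ∀ k < n, 1 ≤ i k := fun k hk => le_trans hN (hi k hk)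
    have hjR : (1:ℝ) ≤ (j:ℝ) := by exact_mod_cast le_trans hN hj
    set i' : ℕ → ℕ := fun k => if k < n then i k else j with hi''
    have hi'ge : ∀ k < n + 1, N ≤ i' k := by
      intro k hk
      by_cases h : k < n
      · simpa [hi'', h] using hi k h
      · simpa [hi'', h] using hj
    have hset : {x ∈ fund N n i | digit N x n = j} = fund N (n+1) i' := by
      ext x
      simp only [fund, Set.mem_setOf_eq, hi'']
      constructor
      · rintro ⟨⟨h1, h2, h3⟩, h4⟩
        refine ⟨h1, h2, fun k hk => ?_⟩
        by_cases hkn : k < n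
        · simp [hkn, h3 k hkn]
        · have hkeq : k = n := by omega
          subst hkeq
          simp [h4]
      · rintro ⟨h1, h2, h3⟩
        refine ⟨⟨h1, h2, fun k hk => ?_⟩, ?_⟩
        · have := h3 k (by omega); rwa [if_pos hk] at this
        · have := h3 n (by omega); rwa [if_neg (lt_irrefl n)] at this
    have hmc : ∀ x : ℝ, mob N i' n x = mob N i n x := fun x =>
      mob_congr n i' i (fun k hk => by simp [hi'', hk]) x
    have hi'n : i' n = j := by simp [hi'']
    have e' : ∀ x : ℝ, mob N i' (n+1) x = mob N i n ((N:ℝ)/((j:ℝ) + x)) := fun x => by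
      rw [mob_back n i' x, hi'n, hmc]
    have vA := vol_fund hN n i hi
    have vB := vol_fund hN (n+1) i' hi'ge
    have hc : (1:ℝ) ≤ ((CC N i n).2.2.1 : ℝ) := by exact_mod_cast C_pos n i hi1
    have hd : (0:ℝ) ≤ ((CC N i n).2.2.2 : ℝ) := by positivity
    have hu0 : (0:ℝ) ≤ (N:ℝ)/((j:ℝ)+0) := by positivity
    have hu1 : (0:ℝ) ≤ (N:ℝ)/((j:ℝ)+1) := by positivity
    have hule : (N:ℝ)/((j:ℝ)+1) ≤ (N:ℝ)/((j:ℝ)+0) := by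
      rw [div_le_div_iff₀ (by linarith) (by linarith)]
      nlinarith
    have dB := mob_sub (N := N) n i hi1 hu0 hu1
    have dA := mob_sub (N := N) n i hi1 (zero_le_one) (le_refl (0:ℝ))
    have f0 : (0:ℝ) < ((CC N i n).2.2.1 : ℝ) + ((CC N i n).2.2.2 : ℝ) * ((N:ℝ)/((j:ℝ)+0)) := by
      nlinarith [mul_nonneg hd hu0]
    have f1 : (0:ℝ) < ((CC N i n).2.2.1 : ℝ) + ((CC N i n).2.2.2 : ℝ) * ((N:ℝ)/((j:ℝ)+1)) := by
      nlinarith [mul_nonneg hd hu1]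
    have g1 : (0:ℝ) < ((CC N i n).2.2.1 : ℝ) + ((CC N i n).2.2.2 : ℝ) * 1 := by nlinarith
    have g0 : (0:ℝ) < ((CC N i n).2.2.1 : ℝ) + ((CC N i n).2.2.2 : ℝ) * 0 := by nlinarith
    have hsc := mirror (N := N) n i hi1
    rw [hset, vB, e' 1, e' 0, abs_sub_comm, dB,
      abs_mob_aux N n (sub_nonneg.2 hule) (mul_pos f0 f1), vA, dA,
      abs_mob_aux N n (by norm_num) (mul_pos g1 g0)]
    exact final_algebra N n hNR hc hd hjR hsc
end

section
/- The extended measure Ḡ_N is preserved by the natural extension map T̄_N: for every Borel set B ⊆ I², Ḡ_N(T̄_N^{-1}(B)) = Ḡ_N(B). -/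
open MeasureTheory Set Filter
open scoped Classical Topology ENNReal

/-- The natural extension map `T̄_N(x,y) = (T_N(x), N/(a_1(x)+y))` on `I²`
(defined as `(0,y)` for rational `x`, a set of measure zero). -/
noncomputable def TNbar (N : ℕ) (p : ℝ × ℝ) : ℝ × ℝ :=
  if Irrational p.1 then (TN N p.1, (N : ℝ) / ((⌊(N:ℝ)/p.1⌋₊ : ℝ) + p.2)) else (0, p.2)

/-- The extended measure `Ḡ_N(B) = (1/log((N+1)/N)) ∬_B N dx dy/(xy+N)²` on `I²`. -/
noncomputable def GNbar (N : ℕ) : Measure (ℝ × ℝ) :=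
  (volume.restrict (Icc (0:ℝ) 1 ×ˢ Icc (0:ℝ) 1)).withDensity
    (fun p => ENNReal.ofReal ((Real.log ((N+1)/N))⁻¹ * N / (p.1 * p.2 + N) ^ 2))

namespace CFAux

/-- density of GNbar -/
noncomputable def dens (N : ℕ) (p : ℝ × ℝ) : ℝ≥0∞ :=
  ENNReal.ofReal ((Real.log ((N+1)/N))⁻¹ * N / (p.1 * p.2 + N) ^ 2)

/-- the branch map on the strip with digit `a` -/
noncomputable def phiMap (N a : ℕ) (p : ℝ × ℝ) : ℝ × ℝ :=
  ((N:ℝ)/p.1 - a, (N:ℝ)/((a:ℝ) + p.2))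

def Da (N a : ℕ) : Set (ℝ × ℝ) := Ioo ((N:ℝ)/((a:ℝ)+1)) ((N:ℝ)/(a:ℝ)) ×ˢ Ioo (0:ℝ) 1
def Ea (N a : ℕ) : Set (ℝ × ℝ) := Ioo (0:ℝ) 1 ×ˢ Ioo ((N:ℝ)/((a:ℝ)+1)) ((N:ℝ)/(a:ℝ))

lemma measurableSet_Da (N a : ℕ) : MeasurableSet (Da N a) :=
  measurableSet_Ioo.prod measurableSet_Ioo

lemma div_div_self' {n c : ℝ} (hn : n ≠ 0) : n / (n / c) = c := by
  rcases eq_or_ne c 0 with rfl | hc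
  · simp
  · field_simp

/-- basic interval flip helper -/
lemma Ioo_div_iff {n b x : ℝ} (hn : 0 < n) (hb : 0 < b) (hx : 0 < x) :
    (n/(b+1) < x ∧ x < n/b) ↔ (b < n/x ∧ n/x < b+1) := by
  rw [div_lt_iff₀ (by linarith), lt_div_iff₀ hb, lt_div_iff₀ hx, div_lt_iff₀ hx]
  constructor <;> rintro ⟨h1, h2⟩ <;> constructor <;> nlinarith

lemma image_phiMap (N a : ℕ) (hN : 1 ≤ N) (ha : N ≤ a) :
    phiMap N a '' Da N a = Ea N a := by
  have hN0 : (0:ℝ) < N := by exact_mod_cast hN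
  have ha0 : (0:ℝ) < a := by
    have : 0 < a := lt_of_lt_of_le (Nat.succ_le_iff.mp hN) ha
    exact_mod_cast this
  ext ⟨u, v⟩
  constructor
  · rintro ⟨⟨x, y⟩, ⟨⟨hx1, hx2⟩, hy1, hy2⟩, h⟩
    have hx0 : 0 < x := lt_trans (by positivity) hx1
    have hflip := (Ioo_div_iff hN0 ha0 hx0).1 ⟨hx1, hx2⟩
    have hay : (0:ℝ) < (a:ℝ) + y := by linarith
    cases h
    constructor
    · exact ⟨by linarith [hflip.1], by linarith [hflip.2]⟩
    · constructor
      · apply div_lt_div_of_pos_left hN0 hay; · linarith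
      · apply div_lt_div_of_pos_left hN0 ha0; · linarith
  · rintro ⟨⟨hu1, hu2⟩, hv1, hv2⟩
    have hv0 : 0 < v := lt_trans (by positivity) hv1
    have hflip := (Ioo_div_iff hN0 ha0 hv0).1 ⟨hv1, hv2⟩
    have hau : (0:ℝ) < (a:ℝ) + u := by linarith
    refine ⟨((N:ℝ)/((a:ℝ)+u), (N:ℝ)/v - a), ⟨?_, ?_⟩, ?_⟩
    · have hx0 : (0:ℝ) < (N:ℝ)/((a:ℝ)+u) := by positivity
      refine (Ioo_div_iff hN0 ha0 hx0).2 ?_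
      rw [div_div_self' (ne_of_gt hN0)]
      exact ⟨by linarith, by linarith⟩
    · exact ⟨by linarith [hflip.1], by linarith [hflip.2]⟩
    · have h1 : (N:ℝ)/((N:ℝ)/((a:ℝ)+u)) = (a:ℝ)+u := div_div_self' (ne_of_gt hN0)
      have h2 : (a:ℝ) + ((N:ℝ)/v - a) = (N:ℝ)/v := by ring
      simp only [phiMap, h1, h2, div_div_self' (ne_of_gt hN0)]
      simp only [Prod.mk.injEq]
      exact ⟨by ring, trivial⟩

lemma injOn_phiMap (N a : ℕ) (hN : 1 ≤ N) (ha : N ≤ a) :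
    InjOn (phiMap N a) (Da N a) := by
  have hN0 : (0:ℝ) < N := by exact_mod_cast hN
  rintro ⟨x, y⟩ ⟨⟨hx1, _⟩, hy1, _⟩ ⟨x', y'⟩ ⟨⟨hx1', _⟩, hy1', _⟩ h
  have hx0 : 0 < x := lt_trans (by positivity) hx1
  have hx0' : 0 < x' := lt_trans (by positivity) hx1'
  have ha0 : (0:ℝ) ≤ a := Nat.cast_nonneg a
  have h1 : (N:ℝ)/x - a = (N:ℝ)/x' - a := congrArg Prod.fst h
  have h2 : (N:ℝ)/((a:ℝ)+y) = (N:ℝ)/((a:ℝ)+y') := congrArg Prod.snd h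
  have hxx : x = x' := by
    have h : (N:ℝ)/x = (N:ℝ)/x' := by linarith
    rw [div_eq_div_iff (ne_of_gt hx0) (ne_of_gt hx0')] at h
    have := mul_left_cancel₀ (ne_of_gt hN0) h
    linarith
  have hyy : y = y' := by
    have hay : (0:ℝ) < (a:ℝ) + y := by linarith
    have hay' : (0:ℝ) < (a:ℝ) + y' := by linarith
    rw [div_eq_div_iff (ne_of_gt hay) (ne_of_gt hay')] at h2
    have := mul_left_cancel₀ (ne_of_gt hN0) h2
    linarith
  simp [hxx, hyy]


/-- the (f)derivative of `phiMap` -/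
noncomputable def fDer (N a : ℕ) (p : ℝ × ℝ) : ℝ × ℝ →L[ℝ] ℝ × ℝ :=
  ContinuousLinearMap.prodMap
    (ContinuousLinearMap.smulRight (1 : ℝ →L[ℝ] ℝ) (-(N:ℝ)/p.1^2))
    (ContinuousLinearMap.smulRight (1 : ℝ →L[ℝ] ℝ) (-(N:ℝ)/((a:ℝ)+p.2)^2))

lemma det_smulRight_prodMap (c d : ℝ) :
    (ContinuousLinearMap.prodMap
      (ContinuousLinearMap.smulRight (1 : ℝ →L[ℝ] ℝ) c)
      (ContinuousLinearMap.smulRight (1 : ℝ →L[ℝ] ℝ) d)).det = c * d := by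
  rw [ContinuousLinearMap.det]
  have h : (ContinuousLinearMap.prodMap
      (ContinuousLinearMap.smulRight (1 : ℝ →L[ℝ] ℝ) c)
      (ContinuousLinearMap.smulRight (1 : ℝ →L[ℝ] ℝ) d)).toLinearMap
      = LinearMap.prodMap (c • (1 : ℝ →ₗ[ℝ] ℝ)) (d • (1 : ℝ →ₗ[ℝ] ℝ)) := by
    ext x <;> simp [mul_comm]
  rw [h, ← LinearMap.det_toMatrix (Module.Basis.finTwoProd ℝ)]
  rw [show (LinearMap.toMatrix (Module.Basis.finTwoProd ℝ) (Module.Basis.finTwoProd ℝ)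
      (LinearMap.prodMap (c • (1 : ℝ →ₗ[ℝ] ℝ)) (d • (1 : ℝ →ₗ[ℝ] ℝ)))) = !![c, 0; 0, d] by
    ext i j
    fin_cases i <;> fin_cases j <;>
      simp [LinearMap.toMatrix_apply, Module.Basis.finTwoProd]]
  simp [Matrix.det_fin_two]

lemma det_fDer (N a : ℕ) (p : ℝ × ℝ) :
    (fDer N a p).det = (N:ℝ)^2 / (p.1^2 * ((a:ℝ)+p.2)^2) := by
  rw [fDer, det_smulRight_prodMap]
  rw [div_mul_div_comm]
  ring_nf

lemma hasFDerivWithinAt_phiMap (N a : ℕ) {p : ℝ × ℝ} (hp : p.1 ≠ 0)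
    (hap : (a:ℝ) + p.2 ≠ 0) (s : Set (ℝ × ℝ)) :
    HasFDerivWithinAt (phiMap N a) (fDer N a p) s p := by
  have h1 : HasDerivAt (fun x : ℝ => (N:ℝ)/x - a) (-(N:ℝ)/p.1^2) p.1 := by
    have : HasDerivAt (fun x : ℝ => (N:ℝ)/x) ((N:ℝ) * (-(p.1^2)⁻¹)) p.1 := by
      simpa [div_eq_mul_inv] using (hasDerivAt_inv hp).const_mul (N:ℝ)
    have := this.sub_const (a:ℝ)
    exact this.congr_deriv (by ring)
  have h2 : HasDerivAt (fun y : ℝ => (N:ℝ)/((a:ℝ)+y)) (-(N:ℝ)/((a:ℝ)+p.2)^2) p.2 := by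
    have hd : HasDerivAt (fun y : ℝ => (a:ℝ) + y) 1 p.2 :=
      (hasDerivAt_id p.2).const_add (a:ℝ)
    have := (hasDerivAt_const p.2 (N:ℝ)).div hd hap
    exact this.congr_deriv (by ring)
  have := (h1.hasFDerivAt.prodMap p h2.hasFDerivAt)
  exact this.hasFDerivWithinAt

lemma Da_facts {N a : ℕ} (hN : 1 ≤ N) (ha : N ≤ a) {p : ℝ × ℝ} (hp : p ∈ Da N a) :
    0 < p.1 ∧ 0 < (a:ℝ) + p.2 ∧ 0 < p.1 * p.2 + N := by
  have hN0 : (0:ℝ) < N := by exact_mod_cast hN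
  have ha0 : (0:ℝ) < a := by
    have : 0 < a := lt_of_lt_of_le (Nat.succ_le_iff.mp hN) ha
    exact_mod_cast this
  obtain ⟨⟨hx1, hx2⟩, hy1, hy2⟩ := hp
  have hx0 : 0 < p.1 := lt_trans (by positivity) hx1
  exact ⟨hx0, by linarith, by nlinarith⟩

lemma dens_identity {N a : ℕ} (hN : 1 ≤ N) (ha : N ≤ a) {p : ℝ × ℝ} (hp : p ∈ Da N a) :
    ENNReal.ofReal |(fDer N a p).det| * dens N (phiMap N a p) = dens N p := by
  obtain ⟨hx0, hay0, hxy0⟩ := Da_facts hN ha hp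
  have hN0 : (0:ℝ) < N := by exact_mod_cast hN
  simp only [dens, phiMap, det_fDer]
  rw [← ENNReal.ofReal_mul (abs_nonneg _)]
  congr 1
  rw [abs_of_nonneg (by positivity)]
  have hkey : ((N:ℝ)/p.1 - a) * ((N:ℝ)/((a:ℝ) + p.2)) + N
      = (N:ℝ) * (p.1 * p.2 + N) / (p.1 * ((a:ℝ) + p.2)) := by
    field_simp
    ring
  rw [hkey]
  generalize (Real.log (((N:ℝ)+1)/(N:ℝ)))⁻¹ = c
  rw [div_pow, mul_pow]
  field_simp

lemma measurable_phiMap (N a : ℕ) : Measurable (phiMap N a) := by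
  apply Measurable.prod
  · exact (measurable_const.div measurable_fst).sub measurable_const
  · exact measurable_const.div (measurable_const.add measurable_snd)

lemma key_cov (N a : ℕ) (hN : 1 ≤ N) (ha : N ≤ a) (B : Set (ℝ × ℝ)) (hB : MeasurableSet B) :
    ∫⁻ p in (phiMap N a ⁻¹' B) ∩ Da N a, dens N p = ∫⁻ p in B ∩ Ea N a, dens N p := by
  have hder : ∀ p ∈ Da N a, HasFDerivWithinAt (phiMap N a) (fDer N a p) (Da N a) p := by
    intro p hp
    obtain ⟨hx0, hay0, _⟩ := Da_facts hN ha hp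
    exact hasFDerivWithinAt_phiMap N a (ne_of_gt hx0) (ne_of_gt hay0) _
  have h := lintegral_image_eq_lintegral_abs_det_fderiv_mul volume (measurableSet_Da N a)
    hder (injOn_phiMap N a hN ha) (B.indicator (dens N))
  rw [image_phiMap N a hN ha] at h
  have hL : ∫⁻ x in Ea N a, B.indicator (dens N) x = ∫⁻ p in B ∩ Ea N a, dens N p := by
    rw [lintegral_indicator hB, Measure.restrict_restrict hB]
  have hpre : MeasurableSet (phiMap N a ⁻¹' B) := measurable_phiMap N a hB
  have hR : ∫⁻ x in Da N a, ENNReal.ofReal |(fDer N a x).det|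
        * B.indicator (dens N) (phiMap N a x)
      = ∫⁻ p in (phiMap N a ⁻¹' B) ∩ Da N a, dens N p := by
    have e1 : ∀ x, ENNReal.ofReal |(fDer N a x).det| * B.indicator (dens N) (phiMap N a x)
        = (phiMap N a ⁻¹' B).indicator
            (fun x => ENNReal.ofReal |(fDer N a x).det| * dens N (phiMap N a x)) x := by
      intro x
      by_cases hx : phiMap N a x ∈ B <;>
        simp [Set.indicator, hx, Set.mem_preimage]
    simp only [e1]
    rw [lintegral_indicator hpre, Measure.restrict_restrict hpre]
    apply setLIntegral_congr_fun (hpre.inter (measurableSet_Da N a))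
    intro x hx
    exact dens_identity hN ha hx.2
  rw [hL, hR] at h
  exact h.symm

def K (N : ℕ) : Set ℝ := {x | x = 0 ∨ ∃ a : ℕ, x = (N:ℝ)/a}

lemma countable_K (N : ℕ) : (K N).Countable := by
  have h : K N ⊆ {0} ∪ Set.range (fun a : ℕ => (N:ℝ)/a) := by
    rintro x (rfl | ⟨a, rfl⟩)
    · exact Or.inl rfl
    · exact Or.inr ⟨a, rfl⟩
  exact ((Set.countable_singleton 0).union (Set.countable_range _)).mono h

lemma cover_lemma (N : ℕ) (hN : 1 ≤ N) {x : ℝ} (hx : x ∈ Icc (0:ℝ) 1) (hxK : x ∉ K N) :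
    ∃ n : ℕ, x ∈ Ioo ((N:ℝ)/(((N+n:ℕ):ℝ)+1)) ((N:ℝ)/((N+n:ℕ):ℝ)) := by
  have hN0 : (0:ℝ) < N := by exact_mod_cast hN
  have hx0 : 0 < x := lt_of_le_of_ne hx.1 (fun h => hxK (Or.inl h.symm))
  have hx1 : x < 1 := lt_of_le_of_ne hx.2 (by
    intro h
    exact hxK (Or.inr ⟨N, by rw [h, div_self (ne_of_gt hN0)]⟩))
  have hNx : (N:ℝ) < (N:ℝ)/x := by
    rw [lt_div_iff₀ hx0]; nlinarith
  set b := ⌊(N:ℝ)/x⌋₊ with hb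
  have hfl : (b:ℝ) ≤ (N:ℝ)/x := Nat.floor_le (by positivity)
  have hne : (N:ℝ)/x ≠ (b:ℝ) := by
    intro h
    have hb0 : (0:ℝ) < b := by linarith
    apply hxK
    refine Or.inr ⟨b, ?_⟩
    field_simp at h ⊢
    linarith [h]
  have hblt : (b:ℝ) < (N:ℝ)/x := lt_of_le_of_ne hfl (Ne.symm hne)
  have hlt1 : (N:ℝ)/x < (b:ℝ) + 1 := Nat.lt_floor_add_one _
  have hNb : N ≤ b := by
    have : (N:ℝ) < (b:ℝ) + 1 := lt_trans hNx hlt1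
    have : N < b + 1 := by exact_mod_cast this
    omega
  have hb0 : (0:ℝ) < b := by
    have : 0 < b := lt_of_lt_of_le (Nat.succ_le_iff.mp hN) hNb
    exact_mod_cast this
  refine ⟨b - N, ?_⟩
  have hcast : ((N + (b - N) : ℕ) : ℝ) = (b:ℝ) := by
    congr 1
    omega
  rw [hcast]
  constructor
  · rw [div_lt_iff₀ (by linarith)]
    rw [div_lt_iff₀ hx0] at hlt1
    nlinarith
  · rw [lt_div_iff₀ hb0]
    rw [lt_div_iff₀ hx0] at hblt
    nlinarith

lemma Ioo_subset_Icc (N a : ℕ) (hN : 1 ≤ N) (ha : N ≤ a) :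
    Ioo ((N:ℝ)/((a:ℝ)+1)) ((N:ℝ)/(a:ℝ)) ⊆ Icc (0:ℝ) 1 := by
  have hN0 : (0:ℝ) < N := by exact_mod_cast hN
  have ha0 : (0:ℝ) < a := by
    have : 0 < a := lt_of_lt_of_le (Nat.succ_le_iff.mp hN) ha
    exact_mod_cast this
  have haN : (N:ℝ) ≤ a := by exact_mod_cast ha
  intro x ⟨h1, h2⟩
  constructor
  · have : (0:ℝ) < (N:ℝ)/((a:ℝ)+1) := by positivity
    linarith
  · have : (N:ℝ)/(a:ℝ) ≤ 1 := by
      rw [div_le_one ha0]; linarith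
    linarith

lemma pairwise_Ioo (N : ℕ) (hN : 1 ≤ N) :
    Pairwise (Function.onFun Disjoint fun n : ℕ =>
      Ioo ((N:ℝ)/(((N+n:ℕ):ℝ)+1)) ((N:ℝ)/((N+n:ℕ):ℝ))) := by
  have hN0 : (0:ℝ) < N := by exact_mod_cast hN
  have aux : ∀ m n : ℕ, m < n → Disjoint
      (Ioo ((N:ℝ)/(((N+m:ℕ):ℝ)+1)) ((N:ℝ)/((N+m:ℕ):ℝ)))
      (Ioo ((N:ℝ)/(((N+n:ℕ):ℝ)+1)) ((N:ℝ)/((N+n:ℕ):ℝ))) := by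
    intro m n hmn
    rw [Set.disjoint_left]
    rintro x ⟨hx1, _⟩ ⟨_, hx2⟩
    have hle : ((N+m:ℕ):ℝ)+1 ≤ ((N+n:ℕ):ℝ) := by
      push_cast
      have : m + 1 ≤ n := hmn
      have : (m:ℝ) + 1 ≤ n := by exact_mod_cast this
      linarith
    have hpos : (0:ℝ) < ((N+m:ℕ):ℝ)+1 := by positivity
    have : (N:ℝ)/((N+n:ℕ):ℝ) ≤ (N:ℝ)/(((N+m:ℕ):ℝ)+1) := by
      apply div_le_div_of_nonneg_left hN0.le hpos hle
    linarith
  intro m n hmn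
  rcases hmn.lt_or_gt with h | h
  · exact aux m n h
  · exact (aux n m h).symm

lemma null_prod_left {S : Set ℝ} (hS : volume S = 0) :
    volume (S ×ˢ (univ : Set ℝ)) = 0 := by
  rw [MeasureTheory.Measure.volume_eq_prod, Measure.prod_prod, hS, zero_mul]

lemma null_prod_right {S : Set ℝ} (hS : volume S = 0) :
    volume ((univ : Set ℝ) ×ˢ S) = 0 := by
  rw [MeasureTheory.Measure.volume_eq_prod, Measure.prod_prod, hS, mul_zero]

lemma null_compl_Da (N : ℕ) (hN : 1 ≤ N) :
    volume ((Icc (0:ℝ) 1 ×ˢ Icc (0:ℝ) 1) \ ⋃ n, Da N (N+n)) = 0 := by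
  apply measure_mono_null
    (t := (K N ×ˢ (univ : Set ℝ)) ∪ ((univ : Set ℝ) ×ˢ ({0,1} : Set ℝ)))
  · rintro ⟨x, y⟩ ⟨⟨hx, hy⟩, hns⟩
    by_cases hxK : x ∈ K N
    · exact Or.inl ⟨hxK, trivial⟩
    · obtain ⟨n, hn⟩ := cover_lemma N hN hx hxK
      right
      refine ⟨trivial, ?_⟩
      have hyn : y ∉ Ioo (0:ℝ) 1 := by
        intro hy'
        exact hns (Set.mem_iUnion.2 ⟨n, ⟨hn, hy'⟩⟩)
      simp only [Set.mem_Ioo, not_and_or, not_lt] at hyn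
      simp only [Set.mem_insert_iff, Set.mem_singleton_iff]
      rcases hyn with h | h
      · exact Or.inl (le_antisymm h hy.1)
      · exact Or.inr (le_antisymm hy.2 h)
  · exact measure_union_null (null_prod_left ((countable_K N).measure_zero _))
      (null_prod_right (((Set.finite_singleton 1).insert 0).measure_zero _))

lemma null_compl_Ea (N : ℕ) (hN : 1 ≤ N) :
    volume ((Icc (0:ℝ) 1 ×ˢ Icc (0:ℝ) 1) \ ⋃ n, Ea N (N+n)) = 0 := by
  apply measure_mono_null
    (t := ((univ : Set ℝ) ×ˢ K N) ∪ (({0,1} : Set ℝ) ×ˢ (univ : Set ℝ)))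
  · rintro ⟨x, y⟩ ⟨⟨hx, hy⟩, hns⟩
    by_cases hyK : y ∈ K N
    · exact Or.inl ⟨trivial, hyK⟩
    · obtain ⟨n, hn⟩ := cover_lemma N hN hy hyK
      right
      refine ⟨?_, trivial⟩
      have hxn : x ∉ Ioo (0:ℝ) 1 := by
        intro hx'
        exact hns (Set.mem_iUnion.2 ⟨n, ⟨hx', hn⟩⟩)
      simp only [Set.mem_Ioo, not_and_or, not_lt] at hxn
      simp only [Set.mem_insert_iff, Set.mem_singleton_iff]
      rcases hxn with h | h
      · exact Or.inl (le_antisymm h hx.1)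
      · exact Or.inr (le_antisymm hx.2 h)
  · exact measure_union_null (null_prod_right ((countable_K N).measure_zero _))
      (null_prod_left (((Set.finite_singleton 1).insert 0).measure_zero _))

lemma null_notIrr : volume {p : ℝ × ℝ | ¬ Irrational p.1} = 0 := by
  apply measure_mono_null (t := (Set.range ((↑) : ℚ → ℝ)) ×ˢ (univ : Set ℝ))
  · rintro ⟨x, y⟩ hp
    simp only [Set.mem_setOf_eq, Irrational, not_not] at hp
    exact ⟨hp, trivial⟩
  · exact null_prod_left ((Set.countable_range _).measure_zero _)

lemma setLIntegral_congr_null_diff {s t : Set (ℝ × ℝ)} (hts : t ⊆ s)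
    (hnull : volume (s \ t) = 0) (f : ℝ × ℝ → ℝ≥0∞) :
    ∫⁻ p in s, f p = ∫⁻ p in t, f p := by
  apply setLIntegral_congr
  rw [MeasureTheory.ae_eq_set]
  exact ⟨hnull, by rw [Set.diff_eq_empty.2 hts]; simp⟩

lemma TNbar_eq_phi {N a : ℕ} (hN : 1 ≤ N) (ha : N ≤ a) {p : ℝ × ℝ}
    (hp : p ∈ Da N a) (hirr : Irrational p.1) : TNbar N p = phiMap N a p := by
  have hN0 : (0:ℝ) < N := by exact_mod_cast hN
  have ha0 : (0:ℝ) < a := by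
    have : 0 < a := lt_of_lt_of_le (Nat.succ_le_iff.mp hN) ha
    exact_mod_cast this
  obtain ⟨⟨hx1, hx2⟩, _, _⟩ := hp
  have hx0 : 0 < p.1 := lt_trans (by positivity) hx1
  have hflip := (Ioo_div_iff hN0 ha0 hx0).1 ⟨hx1, hx2⟩
  have hnfl : ⌊(N:ℝ)/p.1⌋₊ = a := by
    rw [Nat.floor_eq_iff (by positivity)]
    exact ⟨hflip.1.le, hflip.2⟩
  have hifl : ⌊(N:ℝ)/p.1⌋ = (a:ℤ) := by
    rw [Int.floor_eq_iff]
    constructor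
    · push_cast; exact hflip.1.le
    · push_cast; exact hflip.2
  rw [TNbar, if_pos hirr, TN, hnfl, hifl, phiMap]
  push_cast
  rfl

lemma measurable_TNbar (N : ℕ) : Measurable (TNbar N) := by
  have hIrr : MeasurableSet {p : ℝ × ℝ | Irrational p.1} := by
    have h : {p : ℝ × ℝ | Irrational p.1}
        = Prod.fst ⁻¹' ((Set.range ((↑) : ℚ → ℝ))ᶜ) := rfl
    rw [h]
    exact measurable_fst ((Set.countable_range _).measurableSet.compl)
  apply Measurable.ite hIrr
  · apply Measurable.prod
    · unfold TN
      exact (measurable_const.div measurable_fst).sub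
        (measurable_from_top.comp ((measurable_const.div measurable_fst).floor))
    · exact measurable_const.div
        ((measurable_from_top.comp ((measurable_const.div measurable_fst).nat_floor)).add
          measurable_snd)
  · exact measurable_const.prodMk measurable_snd

end CFAux


lemma CFAux.measurableSet_Ea (N a : ℕ) : MeasurableSet (CFAux.Ea N a) :=
  measurableSet_Ioo.prod measurableSet_Ioo

/-- The extended measure `Ḡ_N` is preserved by the natural extension map `T̄_N`:
for every Borel set `B ⊆ I²`, `Ḡ_N(T̄_N⁻¹(B)) = Ḡ_N(B)`. -/
theorem GNbar_invariant (N : ℕ) (hN : 1 ≤ N) (B : Set (ℝ × ℝ))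
    (hB : MeasurableSet B) (hBI : B ⊆ Icc (0:ℝ) 1 ×ˢ Icc (0:ℝ) 1) :
    GNbar N (TNbar N ⁻¹' B) = GNbar N B := by
  classical
  set R : Set (ℝ × ℝ) := Icc (0:ℝ) 1 ×ˢ Icc (0:ℝ) 1 with hR
  have hTm : Measurable (TNbar N) := CFAux.measurable_TNbar N
  have hpre : MeasurableSet (TNbar N ⁻¹' B) := hTm hB
  have happly : ∀ S : Set (ℝ × ℝ), MeasurableSet S →
      GNbar N S = ∫⁻ p in S ∩ R, CFAux.dens N p := by
    intro S hS
    rw [GNbar, withDensity_apply _ hS, Measure.restrict_restrict hS]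
    rfl
  have hIrrM : MeasurableSet {p : ℝ × ℝ | Irrational p.1} := by
    have h : {p : ℝ × ℝ | Irrational p.1}
        = Prod.fst ⁻¹' ((Set.range ((↑) : ℚ → ℝ))ᶜ) := rfl
    rw [h]; exact measurable_fst ((Set.countable_range _).measurableSet.compl)
  set Irr : Set (ℝ × ℝ) := {p | Irrational p.1} with hIrrdef
  have hle : ∀ n : ℕ, N ≤ N + n := fun n => Nat.le_add_right N n
  have hDaR : ∀ n : ℕ, CFAux.Da N (N+n) ⊆ R := by
    rintro n ⟨x, y⟩ ⟨hx, hy⟩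
    exact ⟨CFAux.Ioo_subset_Icc N (N+n) hN (hle n) hx, Set.Ioo_subset_Icc_self hy⟩
  have hEaR : ∀ n : ℕ, CFAux.Ea N (N+n) ⊆ R := by
    rintro n ⟨x, y⟩ ⟨hx, hy⟩
    exact ⟨Set.Ioo_subset_Icc_self hx, CFAux.Ioo_subset_Icc N (N+n) hN (hle n) hy⟩
  have hDadisj : Pairwise (Function.onFun Disjoint fun n : ℕ => CFAux.Da N (N+n)) := by
    intro m n hmn
    have h := CFAux.pairwise_Ioo N hN hmn
    rw [Function.onFun, Set.disjoint_left] at h ⊢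
    rintro p hpm hpn
    exact h hpm.1 hpn.1
  have hEadisj : Pairwise (Function.onFun Disjoint fun n : ℕ => CFAux.Ea N (N+n)) := by
    intro m n hmn
    have h := CFAux.pairwise_Ioo N hN hmn
    rw [Function.onFun, Set.disjoint_left] at h ⊢
    rintro p hpm hpn
    exact h hpm.2 hpn.2
  rw [happly _ hpre, happly _ hB]
  calc ∫⁻ p in (TNbar N ⁻¹' B) ∩ R, CFAux.dens N p
      = ∫⁻ p in ⋃ n : ℕ, ((TNbar N ⁻¹' B) ∩ (CFAux.Da N (N+n) ∩ Irr)),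
          CFAux.dens N p := by
        apply CFAux.setLIntegral_congr_null_diff
        · rintro p hp
          obtain ⟨n, hpB, hpD, _⟩ := Set.mem_iUnion.1 hp
          exact ⟨hpB, hDaR n hpD⟩
        · apply measure_mono_null
            (t := ((R \ ⋃ n : ℕ, CFAux.Da N (N+n)) ∪ {p : ℝ × ℝ | ¬ Irrational p.1}))
          · rintro p ⟨⟨hpB, hpR⟩, hpu⟩
            by_cases hirr : Irrational p.1
            · left
              refine ⟨hpR, fun hmem => ?_⟩
              obtain ⟨n, hn⟩ := Set.mem_iUnion.1 hmem
              exact hpu (Set.mem_iUnion.2 ⟨n, hpB, hn, hirr⟩)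
            · exact Or.inr hirr
          · exact measure_union_null (CFAux.null_compl_Da N hN) CFAux.null_notIrr
    _ = ∑' n : ℕ, ∫⁻ p in (TNbar N ⁻¹' B) ∩ (CFAux.Da N (N+n) ∩ Irr),
          CFAux.dens N p := by
        exact lintegral_iUnion
          (fun n => hpre.inter ((CFAux.measurableSet_Da N (N+n)).inter hIrrM))
          (fun m n hmn => ((hDadisj hmn).mono
            (fun p hp => hp.2.1) (fun p hp => hp.2.1))) _
    _ = ∑' n : ℕ, ∫⁻ p in B ∩ CFAux.Ea N (N+n), CFAux.dens N p := by
        apply tsum_congr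
        intro n
        have hseteq : (TNbar N ⁻¹' B) ∩ (CFAux.Da N (N+n) ∩ Irr)
            = ((CFAux.phiMap N (N+n) ⁻¹' B) ∩ CFAux.Da N (N+n)) ∩ Irr := by
          ext p
          simp only [Set.mem_inter_iff, Set.mem_preimage]
          constructor
          · rintro ⟨hb, hda, hirr⟩
            rw [← CFAux.TNbar_eq_phi hN (hle n) hda hirr]
            exact ⟨⟨hb, hda⟩, hirr⟩
          · rintro ⟨⟨hb, hda⟩, hirr⟩
            rw [CFAux.TNbar_eq_phi hN (hle n) hda hirr]
            exact ⟨hb, hda, hirr⟩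
        rw [hseteq]
        have hdrop : ∫⁻ p in ((CFAux.phiMap N (N+n) ⁻¹' B) ∩ CFAux.Da N (N+n)) ∩ Irr,
            CFAux.dens N p
            = ∫⁻ p in (CFAux.phiMap N (N+n) ⁻¹' B) ∩ CFAux.Da N (N+n),
            CFAux.dens N p := by
          symm
          apply CFAux.setLIntegral_congr_null_diff
          · exact Set.inter_subset_left
          · apply measure_mono_null (t := {p : ℝ × ℝ | ¬ Irrational p.1})
            · rintro p ⟨hp1, hp2⟩
              intro hirr
              exact hp2 ⟨hp1, hirr⟩
            · exact CFAux.null_notIrr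
        rw [hdrop]
        exact CFAux.key_cov N (N+n) hN (hle n) B hB
    _ = ∫⁻ p in ⋃ n : ℕ, (B ∩ CFAux.Ea N (N+n)), CFAux.dens N p := by
        symm
        exact lintegral_iUnion
          (fun n => hB.inter (CFAux.measurableSet_Ea N (N+n)))
          (fun m n hmn => ((hEadisj hmn).mono
            (fun p hp => hp.2) (fun p hp => hp.2))) _
    _ = ∫⁻ p in B ∩ R, CFAux.dens N p := by
        symm
        apply CFAux.setLIntegral_congr_null_diff
        · rintro p hp
          obtain ⟨n, hpB, hpE⟩ := Set.mem_iUnion.1 hp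
          exact ⟨hpB, hEaR n hpE⟩
        · apply measure_mono_null (t := R \ ⋃ n : ℕ, CFAux.Ea N (N+n))
          · rintro p ⟨⟨hpB, hpR⟩, hpu⟩
            refine ⟨hpR, fun hmem => ?_⟩
            obtain ⟨n, hn⟩ := Set.mem_iUnion.1 hmem
            exact hpu (Set.mem_iUnion.2 ⟨n, hpB, hn⟩)
          · exact CFAux.null_compl_Ea N hN
end

section
/- The function x ↦ log((x+N)/N) is a fixed point of the Gauss–Kuzmin equation: for every x ∈ I, log((x+N)/N) = Σ_{i ≥ N} ( log((N/i + N)/N) − log((N/(x+i) + N)/N) ), the sum being over all integers i ≥ N. -/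
open MeasureTheory Set Filter
open scoped Classical Topology ENNReal


/-- The function `x ↦ log((x+N)/N)` is a fixed point of the Gauss–Kuzmin equation:
for every `x ∈ I`,
`log((x+N)/N) = Σ_{i ≥ N} (log((N/i+N)/N) − log((N/(x+i)+N)/N))`, the sum over integers
`i ≥ N` being indexed by `i = N + k`, `k : ℕ`. -/
theorem log_fixed_point (N : ℕ) (hN : 1 ≤ N) (x : ℝ) (hx : x ∈ Icc (0:ℝ) 1) :
    Real.log ((x + N) / N) =
      ∑' k : ℕ, (Real.log (((N : ℝ) / ((N + k : ℕ) : ℝ) + N) / N)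
                  - Real.log (((N : ℝ) / (x + ((N + k : ℕ) : ℝ)) + N) / N)) := by
  obtain ⟨hx0, hx1⟩ := hx
  have hN0 : (0:ℝ) < N := by exact_mod_cast hN
  set g : ℕ → ℝ := fun k => Real.log ((x + N + k) / (N + k)) with hg
  have hNk : ∀ k : ℕ, (0:ℝ) < N + k := fun k => by positivity
  have hxNk : ∀ k : ℕ, (0:ℝ) < x + N + k := fun k => by positivity
  have hterm : ∀ k : ℕ,
      (Real.log (((N : ℝ) / ((N + k : ℕ) : ℝ) + N) / N)
        - Real.log (((N : ℝ) / (x + ((N + k : ℕ) : ℝ)) + N) / N))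
      = g k - g (k+1) := by
    intro k
    have h1 : ((N : ℝ) / ((N + k : ℕ) : ℝ) + N) / N = (N + (k+1:ℕ)) / (N + k) := by
      push_cast
      field_simp
      ring
    have h2 : ((N : ℝ) / (x + ((N + k : ℕ) : ℝ)) + N) / N
        = (x + N + (k+1:ℕ)) / (x + N + k) := by
      have : (0:ℝ) < x + ((N:ℝ) + k) := by positivity
      push_cast
      field_simp
      ring
    rw [h1, h2, hg]
    push_cast
    rw [Real.log_div (by positivity) (by positivity),
        Real.log_div (by positivity) (by positivity),
        Real.log_div (by positivity) (by positivity),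
        Real.log_div (by positivity) (by positivity)]
    ring
  rw [tsum_congr hterm]
  have hnonneg : ∀ k : ℕ, 0 ≤ g k - g (k+1) := by
    intro k
    have : (x + N + (k+1:ℕ)) / (x + N + k) ≤ (N + (k+1:ℕ)) / (N + k) := by
      rw [div_le_div_iff₀ (by positivity) (by positivity)]
      push_cast
      nlinarith [hxNk k, hNk k]
    have hle : g (k+1) ≤ g k := by
      rw [hg]
      push_cast
      push_cast at this
      apply Real.log_le_log (by positivity)
      -- goal: (x + N + (k+1)) / (N + (k+1)) ≤ (x + N + k) / (N + k)
      rw [div_le_div_iff₀ (by positivity) (by positivity)]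
      nlinarith [hxNk k, hNk k]
    linarith
  have htends : Tendsto (fun n => ∑ k ∈ Finset.range n, (g k - g (k+1))) atTop
      (𝓝 (Real.log ((x + N) / N))) := by
    have hsum : ∀ n, ∑ k ∈ Finset.range n, (g k - g (k+1)) = g 0 - g n :=
      fun n => Finset.sum_range_sub' g n
    simp only [hsum]
    have hg0 : g 0 = Real.log ((x + N) / N) := by simp [hg]
    have hgl : Tendsto g atTop (𝓝 0) := by
      have h1 : Tendsto (fun n : ℕ => (x + N + n) / (N + n)) atTop (𝓝 1) := by
        have heq : ∀ n : ℕ, (x + N + (n:ℝ)) / (N + n) = 1 + x / (N + n) := by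
          intro n
          field_simp
          ring
        simp only [heq]
        have : Tendsto (fun n : ℕ => x / ((N:ℝ) + n)) atTop (𝓝 0) := by
          apply Tendsto.div_atTop tendsto_const_nhds
          exact tendsto_atTop_add_const_left _ _ tendsto_natCast_atTop_atTop
        simpa using tendsto_const_nhds.add this
      have := (Real.continuousAt_log (by norm_num : (1:ℝ) ≠ 0)).tendsto.comp h1
      simpa [hg, Function.comp_def] using this
    have := (tendsto_const_nhds (x := g 0)).sub hgl
    simpa [hg0] using this
  have hhs : HasSum (fun k => g k - g (k+1)) (Real.log ((x + N) / N)) :=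
    (hasSum_iff_tendsto_nat_of_nonneg hnonneg _).mpr htends
  exact hhs.tsum_eq.symm
end

section
/- (Recursion for the two-dimensional distribution functions.) Let F_n(x,y) = λ̄({(x',y') ∈ I² : T̄_N^n(x',y') ∈ [0,x]×[0,y]}). Then for every n ≥ 0, every x ∈ I and every y with 0 < y ≤ 1, setting ℓ_1 = ⌊N/y⌋, one has F_{n+1}(x,y) = Σ_{i ≥ ℓ_1} ( F_n(N/i, 1) − F_n(N/(x+i), 1) ) − ( F_n(N/ℓ_1, N/y − ℓ_1) − F_n(N/(x+ℓ_1), N/y − ℓ_1) ), the sum being over all integers i ≥ ℓ_1. -/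
open MeasureTheory Set Filter
open scoped Classical Topology ENNReal

/-- The two-dimensional distribution functions `F_n(x,y) = λ̄({(x',y') ∈ I² : T̄_N^n(x',y') ∈ [0,x]×[0,y]})`. -/
noncomputable def Ftwo (N n : ℕ) (x y : ℝ) : ℝ :=
  (volume {p ∈ Icc (0:ℝ) 1 ×ˢ Icc (0:ℝ) 1 | (TNbar N)^[n] p ∈ Icc (0:ℝ) x ×ˢ Icc (0:ℝ) y}).toReal

namespace TwoDimAux

lemma irrational_div {N : ℕ} (hN : 1 ≤ N) {u : ℝ} (hu : Irrational u) :
    Irrational ((N:ℝ)/u) := by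
  rw [div_eq_mul_inv]
  exact hu.inv.natCast_mul (by omega)

lemma irrational_TN {N : ℕ} (hN : 1 ≤ N) {u : ℝ} (hu : Irrational u) :
    Irrational (TN N u) :=
  (irrational_div hN hu).sub_intCast _

lemma measurable_set_irr : MeasurableSet {x : ℝ | Irrational x} := by
  have : {x : ℝ | Irrational x} = (Set.range ((↑) : ℚ → ℝ))ᶜ := rfl
  rw [this]
  exact (Set.countable_range _).measurableSet.compl

lemma measurable_TN (N : ℕ) : Measurable (TN N) := by
  unfold TN
  apply Measurable.sub
  · exact measurable_const.div measurable_id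
  · exact measurable_from_top.comp (Int.measurable_floor.comp (measurable_const.div measurable_id))

lemma measurable_TNbar (N : ℕ) : Measurable (TNbar N) := by
  unfold TNbar
  apply Measurable.ite
  · exact measurable_fst measurable_set_irr
  · apply Measurable.prod
    · exact (measurable_TN N).comp measurable_fst
    · exact measurable_const.div
        ((measurable_from_top.comp
          (Nat.measurable_floor.comp (measurable_const.div measurable_fst))).add measurable_snd)
  · exact measurable_const.prodMk measurable_snd

-- basic numeric facts about irrational u in (0,1)
lemma Ndiv_facts {N : ℕ} (hN : 1 ≤ N) {u : ℝ} (hu : Irrational u) (hu' : u ∈ Ioo (0:ℝ) 1) :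
    ((⌊(N:ℝ)/u⌋₊ : ℝ) < (N:ℝ)/u ∧ (N:ℝ)/u < (⌊(N:ℝ)/u⌋₊ : ℝ) + 1) ∧ N ≤ ⌊(N:ℝ)/u⌋₊ := by
  obtain ⟨h0, h1⟩ := hu'
  have hNpos : (0:ℝ) < N := by exact_mod_cast hN
  have hm : (N:ℝ) < (N:ℝ)/u := by
    rw [lt_div_iff₀ h0]; nlinarith
  have hmpos : (0:ℝ) ≤ (N:ℝ)/u := by positivity
  have hirr : Irrational ((N:ℝ)/u) := irrational_div hN hu
  refine ⟨⟨?_, ?_⟩, ?_⟩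
  · exact lt_of_le_of_ne (Nat.floor_le hmpos) (by
      intro h; exact hirr ⟨(⌊(N:ℝ)/u⌋₊ : ℚ), by push_cast; exact h⟩)
  · exact Nat.lt_floor_add_one _
  · exact Nat.le_floor hm.le

lemma TN_eq {N : ℕ} (hN : 1 ≤ N) {u : ℝ} (hu : Irrational u) (hu' : u ∈ Ioo (0:ℝ) 1) :
    TN N u = (N:ℝ)/u - (⌊(N:ℝ)/u⌋₊ : ℝ) := by
  have hNpos : (0:ℝ) < N := by exact_mod_cast hN
  have hmpos : (0:ℝ) ≤ (N:ℝ)/u := div_nonneg hNpos.le hu'.1.le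
  unfold TN
  rw [← Int.natCast_floor_eq_floor hmpos]
  norm_num

lemma TN_mem {N : ℕ} (hN : 1 ≤ N) {u : ℝ} (hu : Irrational u) (hu' : u ∈ Ioo (0:ℝ) 1) :
    TN N u ∈ Ioo (0:ℝ) 1 := by
  obtain ⟨⟨hf1, hf2⟩, _⟩ := Ndiv_facts hN hu hu'
  rw [TN_eq hN hu hu']
  constructor <;> linarith

lemma TNbar_eq {N : ℕ} {u v : ℝ} (hu : Irrational u) :
    TNbar N (u, v) = (TN N u, (N : ℝ) / ((⌊(N:ℝ)/u⌋₊ : ℝ) + v)) := by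
  unfold TNbar; rw [if_pos hu]

/-- membership/irrationality of iterates -/
lemma iter_props {N : ℕ} (hN : 1 ≤ N) :
    ∀ (n : ℕ) (u v : ℝ), Irrational u → u ∈ Ioo (0:ℝ) 1 → v ∈ Icc (0:ℝ) 1 →
      Irrational ((TNbar N)^[n] (u,v)).1 ∧ ((TNbar N)^[n] (u,v)).1 ∈ Ioo (0:ℝ) 1 ∧
      ((TNbar N)^[n] (u,v)).2 ∈ Icc (0:ℝ) 1 ∧ ((TNbar N)^[n] (u,v)).1 = (TN N)^[n] u := by
  intro n
  induction n with
  | zero => intro u v hu hu' hv; exact ⟨hu, hu', hv, rfl⟩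
  | succ n ih =>
    intro u v hu hu' hv
    have key : (TNbar N)^[n+1] (u,v) = (TNbar N)^[n] (TN N u, (N:ℝ)/((⌊(N:ℝ)/u⌋₊ : ℝ) + v)) := by
      rw [Function.iterate_succ_apply, TNbar_eq hu]
    obtain ⟨⟨hf1, hf2⟩, hfl⟩ := Ndiv_facts hN hu hu'
    have ha1 : (1:ℝ) ≤ (⌊(N:ℝ)/u⌋₊ : ℝ) := by
      have : (1:ℕ) ≤ ⌊(N:ℝ)/u⌋₊ := le_trans hN hfl
      exact_mod_cast this
    have hNpos : (0:ℝ) < N := by exact_mod_cast hN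
    have hNle : (N:ℝ) ≤ (⌊(N:ℝ)/u⌋₊ : ℝ) := by exact_mod_cast hfl
    have hden : (0:ℝ) < (⌊(N:ℝ)/u⌋₊ : ℝ) + v := by linarith [hv.1]
    have hv2 : (N:ℝ)/((⌊(N:ℝ)/u⌋₊ : ℝ) + v) ∈ Icc (0:ℝ) 1 := by
      constructor
      · positivity
      · rw [div_le_one hden]; linarith [hv.1]
    have := ih (TN N u) ((N:ℝ)/((⌊(N:ℝ)/u⌋₊ : ℝ) + v))
      (irrational_TN hN hu) (TN_mem hN hu hu') hv2
    rw [key]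
    refine ⟨this.1, this.2.1, this.2.2.1, ?_⟩
    rw [this.2.2.2, ← Function.iterate_succ_apply]

/-- injectivity of the second coordinate of the iterate in v -/
lemma iter_inj {N : ℕ} (hN : 1 ≤ N) :
    ∀ (n : ℕ) (u : ℝ), Irrational u → u ∈ Ioo (0:ℝ) 1 →
      Set.InjOn (fun v => ((TNbar N)^[n] (u,v)).2) (Icc (0:ℝ) 1) := by
  intro n
  induction n with
  | zero => intro u _ _ v hv w hw h; exact h
  | succ n ih =>
    intro u hu hu' v hv w hw h
    obtain ⟨⟨hf1, hf2⟩, hfl⟩ := Ndiv_facts hN hu hu'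
    have hNpos : (0:ℝ) < N := by exact_mod_cast hN
    have hNle : (N:ℝ) ≤ (⌊(N:ℝ)/u⌋₊ : ℝ) := by exact_mod_cast hfl
    have hdv : (0:ℝ) < (⌊(N:ℝ)/u⌋₊ : ℝ) + v := by linarith [hv.1]
    have hdw : (0:ℝ) < (⌊(N:ℝ)/u⌋₊ : ℝ) + w := by linarith [hw.1]
    have hmem : ∀ z : ℝ, z ∈ Icc (0:ℝ) 1 → (N:ℝ)/((⌊(N:ℝ)/u⌋₊ : ℝ) + z) ∈ Icc (0:ℝ) 1 := by
      intro z hz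
      have hd : (0:ℝ) < (⌊(N:ℝ)/u⌋₊ : ℝ) + z := by linarith [hz.1]
      constructor
      · positivity
      · rw [div_le_one hd]; linarith [hz.1]
    have key : ∀ z : ℝ, (TNbar N)^[n+1] (u,z) = (TNbar N)^[n] (TN N u, (N:ℝ)/((⌊(N:ℝ)/u⌋₊ : ℝ) + z)) := by
      intro z; rw [Function.iterate_succ_apply, TNbar_eq hu]
    simp only [key] at h
    have h2 := ih (TN N u) (irrational_TN hN hu) (TN_mem hN hu hu') (hmem v hv) (hmem w hw) h
    have hN0 : (N:ℝ) ≠ 0 := by positivity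
    have heq := (div_eq_div_iff hdv.ne' hdw.ne').mp h2
    have := mul_left_cancel₀ hN0 heq
    linarith

lemma irr_mem_Ioo {u : ℝ} (hu : Irrational u) (h : u ∈ Icc (0:ℝ) 1) : u ∈ Ioo (0:ℝ) 1 := by
  refine ⟨lt_of_le_of_ne h.1 ?_, lt_of_le_of_ne h.2 ?_⟩
  · intro he; exact (hu.ne_int 0) (by exact_mod_cast he.symm)
  · intro he; exact (hu.ne_int 1) (by exact_mod_cast he)

lemma countable_fiber {N : ℕ} (hN : 1 ≤ N) (n : ℕ) (a : ℝ) :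
    Set.Countable {u : ℝ | Irrational u ∧ (TN N)^[n] u = a} := by
  induction n with
  | zero =>
    exact Set.Countable.mono (fun u hu => hu.2) (Set.countable_singleton a)
  | succ n ih =>
    have hsub : {u : ℝ | Irrational u ∧ (TN N)^[n+1] u = a} ⊆
        ⋃ w ∈ {w : ℝ | Irrational w ∧ (TN N)^[n] w = a},
          {u : ℝ | Irrational u ∧ TN N u = w} := by
      rintro u ⟨hu, hua⟩
      rw [Function.iterate_succ_apply] at hua
      exact Set.mem_biUnion ⟨irrational_TN hN hu, hua⟩ ⟨hu, rfl⟩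
    refine Set.Countable.mono hsub (Set.Countable.biUnion ih (fun w _ => ?_))
    have hsub2 : {u : ℝ | Irrational u ∧ TN N u = w} ⊆
        Set.range (fun m : ℤ => (N:ℝ)/((m:ℝ) + w)) := by
      rintro u ⟨hu, huw⟩
      refine ⟨⌊(N:ℝ)/u⌋, ?_⟩
      have hu0 : u ≠ 0 := fun h => (hu.ne_int 0) (by exact_mod_cast h)
      have hN0 : (N:ℝ) ≠ 0 := by positivity
      have : (N:ℝ)/u = (⌊(N:ℝ)/u⌋ : ℝ) + w := by unfold TN at huw; linarith
      show (N:ℝ)/((⌊(N:ℝ)/u⌋:ℝ)+w) = u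
      rw [← this]; field_simp
    exact Set.Countable.mono hsub2 (Set.countable_range _)

/-- The push-forward measure of Lebesgue on the unit square under `n` iterates. -/
noncomputable def muMap (N n : ℕ) : Measure (ℝ × ℝ) :=
  Measure.map ((TNbar N)^[n]) (volume.restrict (Icc (0:ℝ) 1 ×ˢ Icc (0:ℝ) 1))

lemma muMap_apply (N n : ℕ) {E : Set (ℝ × ℝ)} (hE : MeasurableSet E) :
    muMap N n E = volume ((((TNbar N)^[n]) ⁻¹' E) ∩ (Icc (0:ℝ) 1 ×ˢ Icc (0:ℝ) 1)) := by
  rw [muMap, Measure.map_apply ((measurable_TNbar N).iterate n) hE,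
    Measure.restrict_apply (((measurable_TNbar N).iterate n) hE)]

lemma muMap_fin (N n : ℕ) (E : Set (ℝ × ℝ)) : muMap N n E ≠ ⊤ := by
  refine ne_top_of_le_ne_top ?_ (measure_mono (Set.subset_univ E))
  rw [muMap_apply N n MeasurableSet.univ]
  refine ne_top_of_le_ne_top ?_ (measure_mono (Set.inter_subset_right))
  rw [Measure.volume_eq_prod, Measure.prod_prod, Real.volume_Icc]
  norm_num

lemma Ftwo_eq (N n : ℕ) (a b : ℝ) :
    Ftwo N n a b = (muMap N n (Icc (0:ℝ) a ×ˢ Icc (0:ℝ) b)).toReal := by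
  rw [Ftwo, muMap_apply N n ((measurableSet_Icc).prod measurableSet_Icc)]
  congr 1
  apply congrArg
  ext p
  simp only [Set.mem_setOf_eq, Set.mem_inter_iff, Set.mem_preimage]
  tauto

lemma vol_prod_countable_fst {C : Set ℝ} (hC : Set.Countable C) :
    volume {p : ℝ × ℝ | p.1 ∈ C} = 0 := by
  have h1 : {p : ℝ × ℝ | p.1 ∈ C} = C ×ˢ (Set.univ : Set ℝ) := by
    ext p; simp [Set.mem_prod]
  rw [h1, Measure.volume_eq_prod, Measure.prod_prod, hC.measure_zero, zero_mul]

lemma vol_not_irr : volume {p : ℝ × ℝ | ¬ Irrational p.1} = 0 := by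
  have hC : Set.Countable {x : ℝ | ¬ Irrational x} := by
    have : {x : ℝ | ¬ Irrational x} = Set.range ((↑) : ℚ → ℝ) := by
      ext x; simp [Irrational]
    rw [this]; exact Set.countable_range _
  exact vol_prod_countable_fst (C := {x : ℝ | ¬ Irrational x}) hC

lemma mu_null_not_irr {N : ℕ} (hN : 1 ≤ N) (n : ℕ) :
    muMap N n {q : ℝ × ℝ | ¬ Irrational q.1} = 0 := by
  have hE : MeasurableSet {q : ℝ × ℝ | ¬ Irrational q.1} :=
    (measurable_set_irr.preimage measurable_fst).compl
  rw [muMap_apply N n hE]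
  refine measure_mono_null ?_ vol_not_irr
  rintro ⟨u, v⟩ ⟨hpre, hu, hv⟩
  simp only [Set.mem_setOf_eq, Set.mem_preimage] at hpre ⊢
  intro hirr
  exact hpre (iter_props hN n u v hirr (irr_mem_Ioo hirr hu) hv).1

lemma mu_null_I2c {N : ℕ} (hN : 1 ≤ N) (n : ℕ) :
    muMap N n ((Icc (0:ℝ) 1 ×ˢ Icc (0:ℝ) 1)ᶜ) = 0 := by
  rw [muMap_apply N n ((measurableSet_Icc).prod measurableSet_Icc).compl]
  refine measure_mono_null ?_ vol_not_irr
  rintro ⟨u, v⟩ ⟨hpre, hu, hv⟩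
  simp only [Set.mem_preimage, Set.mem_compl_iff] at hpre
  simp only [Set.mem_setOf_eq]
  intro hirr
  obtain ⟨_, h1, h2, _⟩ := iter_props hN n u v hirr (irr_mem_Ioo hirr hu) hv
  exact hpre (Set.mk_mem_prod (Set.Ioo_subset_Icc_self h1) h2)

lemma mu_null_fst {N : ℕ} (hN : 1 ≤ N) (n : ℕ) (a : ℝ) :
    muMap N n {q : ℝ × ℝ | q.1 = a} = 0 := by
  have hE : MeasurableSet {q : ℝ × ℝ | q.1 = a} :=
    (measurableSet_singleton a).preimage measurable_fst
  rw [muMap_apply N n hE]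
  refine measure_mono_null (fun p hp => ?_)
    (measure_union_null vol_not_irr
      (vol_prod_countable_fst (countable_fiber hN n a)))
  obtain ⟨hpre, hp1, hp2⟩ := hp
  simp only [Set.mem_preimage, Set.mem_setOf_eq] at hpre
  by_cases hirr : Irrational p.1
  · right
    obtain ⟨_, _, _, heq⟩ := iter_props hN n p.1 p.2 hirr (irr_mem_Ioo hirr hp1) hp2
    exact Set.mem_setOf_eq ▸ ⟨hirr, by rw [← heq]; exact hpre⟩
  · left; exact hirr

lemma mu_null_snd {N : ℕ} (hN : 1 ≤ N) (n : ℕ) (c : ℝ) :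
    muMap N n {q : ℝ × ℝ | q.2 = c} = 0 := by
  have hE : MeasurableSet {q : ℝ × ℝ | q.2 = c} :=
    (measurableSet_singleton c).preimage measurable_snd
  rw [muMap_apply N n hE]
  set S : Set (ℝ × ℝ) := {p | Irrational p.1 ∧ p.1 ∈ Icc (0:ℝ) 1 ∧ p.2 ∈ Icc (0:ℝ) 1 ∧
    ((TNbar N)^[n] p).2 = c} with hS
  have hSmeas : MeasurableSet S := by
    refine MeasurableSet.inter (measurable_set_irr.preimage measurable_fst) ?_
    refine MeasurableSet.inter (measurableSet_Icc.preimage measurable_fst) ?_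
    refine MeasurableSet.inter (measurableSet_Icc.preimage measurable_snd) ?_
    exact (measurableSet_singleton c).preimage
      (measurable_snd.comp ((measurable_TNbar N).iterate n))
  have hSnull : volume S = 0 := by
    rw [Measure.volume_eq_prod, Measure.measure_prod_null hSmeas]
    refine Filter.Eventually.of_forall (fun u => ?_)
    simp only [Pi.zero_apply]
    by_cases hirr : Irrational u
    · by_cases hu : u ∈ Icc (0:ℝ) 1
      · refine Set.Subsingleton.measure_zero (fun v hv w hw => ?_) _
        simp only [hS, Set.mem_preimage, Set.mem_setOf_eq] at hv hw
        exact iter_inj hN n u hirr (irr_mem_Ioo hirr hu) hv.2.2.1 hw.2.2.1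
          (by simp only []; rw [hv.2.2.2, hw.2.2.2])
      · have : Prod.mk u ⁻¹' S = ∅ := by
          ext v; simp only [Set.mem_preimage, hS, Set.mem_setOf_eq, Set.mem_empty_iff_false]
          tauto
        rw [this]; exact measure_empty
    · have : Prod.mk u ⁻¹' S = ∅ := by
        ext v; simp only [Set.mem_preimage, hS, Set.mem_setOf_eq, Set.mem_empty_iff_false]
        tauto
      rw [this]; exact measure_empty
  refine measure_mono_null (fun p hp => ?_) (measure_union_null vol_not_irr hSnull)
  obtain ⟨hpre, hp1, hp2⟩ := hp
  simp only [Set.mem_preimage, Set.mem_setOf_eq] at hpre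
  by_cases hirr : Irrational p.1
  · right; exact ⟨hirr, hp1, hp2, hpre⟩
  · left; exact hirr

end TwoDimAux

set_option maxHeartbeats 2000000 in
/-- Recursion for the two-dimensional distribution functions: for `n ≥ 0`, `x ∈ I`,
`0 < y ≤ 1` and `ℓ_1 = ⌊N/y⌋`,
`F_{n+1}(x,y) = Σ_{i ≥ ℓ_1}(F_n(N/i,1) − F_n(N/(x+i),1))
  − (F_n(N/ℓ_1, N/y−ℓ_1) − F_n(N/(x+ℓ_1), N/y−ℓ_1))`,
the sum over integers `i ≥ ℓ_1` being indexed by `i = ℓ_1 + k`, `k : ℕ`. -/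
theorem two_dim_recursion (N : ℕ) (hN : 1 ≤ N) (n : ℕ) (x : ℝ) (hx : x ∈ Icc (0:ℝ) 1)
    (y : ℝ) (hy : y ∈ Ioc (0:ℝ) 1) :
    Ftwo N (n+1) x y =
      (∑' k : ℕ, (Ftwo N n ((N : ℝ) / ((⌊(N : ℝ)/y⌋₊ + k : ℕ) : ℝ)) 1
                   - Ftwo N n ((N : ℝ) / (x + ((⌊(N : ℝ)/y⌋₊ + k : ℕ) : ℝ))) 1))
      - (Ftwo N n ((N : ℝ) / (⌊(N : ℝ)/y⌋₊ : ℝ)) ((N : ℝ)/y - ⌊(N : ℝ)/y⌋₊)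
          - Ftwo N n ((N : ℝ) / (x + (⌊(N : ℝ)/y⌋₊ : ℝ))) ((N : ℝ)/y - ⌊(N : ℝ)/y⌋₊)) := by
  classical
  obtain ⟨hy0, hy1⟩ := hy
  obtain ⟨hx0, hx1⟩ := hx
  have hNpos : (0:ℝ) < N := by exact_mod_cast hN
  set ℓ : ℕ := ⌊(N:ℝ)/y⌋₊ with hℓdef
  set θ : ℝ := (N:ℝ)/y - (ℓ:ℝ) with hθdef
  have hNy : (N:ℝ) ≤ (N:ℝ)/y := by rw [le_div_iff₀ hy0]; nlinarith
  have hNypos : (0:ℝ) < (N:ℝ)/y := by positivity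
  have hℓN : N ≤ ℓ := Nat.le_floor hNy
  have hℓ1 : 1 ≤ ℓ := le_trans hN hℓN
  have hℓR : (1:ℝ) ≤ (ℓ:ℝ) := by exact_mod_cast hℓ1
  have hθ0 : 0 ≤ θ := by
    rw [hθdef]; have := Nat.floor_le hNypos.le; rw [← hℓdef] at this; linarith
  have hθ1 : θ < 1 := by
    rw [hθdef]; have := Nat.lt_floor_add_one ((N:ℝ)/y); rw [← hℓdef] at this; linarith
  have hNyeq : (N:ℝ)/y = (ℓ:ℝ) + θ := by rw [hθdef]; ring
  -- interval endpoints
  set a : ℕ → ℝ := fun k => (N:ℝ)/(((ℓ + k : ℕ)) : ℝ) with hadef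
  set b : ℕ → ℝ := fun k => (N:ℝ)/(x + ((ℓ + k : ℕ) : ℝ)) with hbdef
  have hcast : ∀ k : ℕ, ((ℓ + k : ℕ) : ℝ) = (ℓ:ℝ) + (k:ℝ) := by intro k; push_cast; ring
  have hck_pos : ∀ k : ℕ, (0:ℝ) < ((ℓ + k : ℕ) : ℝ) := by
    intro k; rw [hcast]; have : (0:ℝ) ≤ (k:ℝ) := Nat.cast_nonneg k; linarith
  have hxck_pos : ∀ k : ℕ, (0:ℝ) < x + ((ℓ + k : ℕ) : ℝ) := by
    intro k; have := hck_pos k; linarith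
  have hb0 : ∀ k, 0 ≤ b k := by
    intro k; rw [hbdef]; exact div_nonneg hNpos.le (hxck_pos k).le
  have hb_le_a : ∀ k, b k ≤ a k := by
    intro k; rw [hbdef, hadef]
    exact div_le_div_of_nonneg_left hNpos.le (hck_pos k) (by linarith)
  have ha_le_b : ∀ j k : ℕ, j < k → a k ≤ b j := by
    intro j k hjk
    rw [hbdef, hadef]
    apply div_le_div_of_nonneg_left hNpos.le (hxck_pos j)
    rw [hcast, hcast]
    have : (j:ℝ) + 1 ≤ (k:ℝ) := by exact_mod_cast hjk
    linarith
  -- sets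
  set Bxy : Set (ℝ × ℝ) := Icc (0:ℝ) x ×ˢ Icc (0:ℝ) y with hBdef
  set P : ℕ → Set (ℝ × ℝ) := fun k => Ioc (b k) (a k) ×ˢ Icc (0:ℝ) 1 with hPdef
  set V : Set (ℝ × ℝ) := Ioc (b 0) (a 0) ×ˢ Icc (0:ℝ) θ with hVdef
  set U : Set (ℝ × ℝ) := ⋃ k, P k with hUdef
  set μ : Measure (ℝ × ℝ) := TwoDimAux.muMap N n with hμdef
  have hPmeas : ∀ k, MeasurableSet (P k) := fun k => measurableSet_Ioc.prod measurableSet_Icc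
  have hVmeas : MeasurableSet V := measurableSet_Ioc.prod measurableSet_Icc
  have hUmeas : MeasurableSet U := MeasurableSet.iUnion hPmeas
  have hBmeas : MeasurableSet Bxy := measurableSet_Icc.prod measurableSet_Icc
  have hpreBmeas : MeasurableSet (TNbar N ⁻¹' Bxy) := hBmeas.preimage (TwoDimAux.measurable_TNbar N)
  -- LHS as a measure
  have hlhs : Ftwo N (n+1) x y = (μ (TNbar N ⁻¹' Bxy)).toReal := by
    rw [hμdef, Ftwo, TwoDimAux.muMap_apply N n hpreBmeas]
    congr 2
    ext p
    simp only [Set.mem_setOf_eq, Set.mem_inter_iff, Set.mem_preimage,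
      Function.iterate_succ_apply']
    tauto
  -- pointwise identification outside a null set
  have hpoint : ∀ w z : ℝ, Irrational w → (w, z) ∈ (Icc (0:ℝ) 1 ×ˢ Icc (0:ℝ) 1) →
      z ≠ θ → z ≠ 1 → (∀ k, w ≠ b k) →
      ((w, z) ∈ TNbar N ⁻¹' Bxy ↔ (w, z) ∈ U \ V) := by
    intro w z hirrw hI2 hzθ hz1 hwb
    obtain ⟨hwI, hzI⟩ : w ∈ Icc (0:ℝ) 1 ∧ z ∈ Icc (0:ℝ) 1 := hI2
    have hwIoo : w ∈ Ioo (0:ℝ) 1 := TwoDimAux.irr_mem_Ioo hirrw hwI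
    have hw0 : 0 < w := hwIoo.1
    set m : ℝ := (N:ℝ)/w with hmdef
    set i : ℕ := ⌊m⌋₊ with hidef
    obtain ⟨⟨hfm1, hfm2⟩, hfiN⟩ := TwoDimAux.Ndiv_facts hN hirrw hwIoo
    rw [← hmdef, ← hidef] at hfm1 hfm2 hfiN
    have hirrm : Irrational m := TwoDimAux.irrational_div hN hirrw
    have hm0 : (0:ℝ) ≤ m := by positivity
    have hm_ne : ∀ j : ℕ, m ≠ (j:ℝ) := by
      intro j h; exact hirrm ⟨(j:ℚ), by push_cast; exact h.symm⟩
    have hm_nex : ∀ c : ℝ, w ≠ (N:ℝ)/c → m ≠ c → True := fun _ _ _ => trivial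
    have hm_eq : w * m = N := by rw [hmdef]; field_simp
    have hle_iff : ∀ c : ℝ, 0 < c → (w ≤ (N:ℝ)/c ↔ c ≤ m) := by
      intro c hc; rw [le_div_iff₀ hc]
      constructor <;> (intro h; nlinarith)
    have hlt_iff : ∀ c : ℝ, 0 < c → ((N:ℝ)/c < w ↔ m < c) := by
      intro c hc; rw [div_lt_iff₀ hc]
      constructor <;> (intro h; nlinarith)
    have hiz : (0:ℝ) < (i:ℝ) + z := by
      have : (1:ℝ) ≤ (i:ℝ) := by exact_mod_cast le_trans hN hfiN
      linarith [hzI.1]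
    -- membership in the preimage
    have hpre_iff : (w, z) ∈ TNbar N ⁻¹' Bxy ↔ (m ≤ x + (i:ℝ) ∧ (N:ℝ)/y ≤ (i:ℝ) + z) := by
      rw [Set.mem_preimage, TwoDimAux.TNbar_eq hirrw, hBdef]
      rw [Set.prodMk_mem_set_prod_eq, Set.mem_Icc, Set.mem_Icc]
      rw [TwoDimAux.TN_eq hN hirrw hwIoo, ← hmdef, ← hidef]
      constructor
      · rintro ⟨⟨_, h1⟩, _, h2⟩
        refine ⟨by linarith, ?_⟩
        rw [div_le_iff₀ hiz] at h2
        rw [div_le_iff₀ hy0]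
        nlinarith
      · rintro ⟨h1, h2⟩
        refine ⟨⟨by linarith, by linarith⟩, by positivity, ?_⟩
        rw [div_le_iff₀ hy0] at h2
        rw [div_le_iff₀ hiz]
        nlinarith
    -- membership in Ioc pieces
    have hIoc_iff : ∀ k : ℕ, w ∈ Ioc (b k) (a k) ↔
        (((ℓ + k : ℕ) : ℝ) ≤ m ∧ m < x + ((ℓ + k : ℕ) : ℝ)) := by
      intro k
      rw [Set.mem_Ioc, hbdef, hadef]
      rw [hle_iff _ (hck_pos k), hlt_iff _ (hxck_pos k)]
      tauto
    have hfloor_of : ∀ k : ℕ, ((ℓ + k : ℕ) : ℝ) ≤ m → m < x + ((ℓ + k : ℕ) : ℝ) → i = ℓ + k := by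
      intro k h1 h2
      rw [hidef]
      rw [Nat.floor_eq_iff hm0]
      exact ⟨h1, by linarith⟩
    constructor
    · -- forward
      intro hmem
      obtain ⟨h1, h2⟩ := hpre_iff.mp hmem
      -- ℓ ≤ i
      have hzlt1 : z < 1 := lt_of_le_of_ne hzI.2 hz1
      have hli : ℓ ≤ i := by
        by_contra hc
        push_neg at hc
        have : (i:ℝ) + 1 ≤ (ℓ:ℝ) := by exact_mod_cast hc
        rw [hNyeq] at h2
        linarith
      set k : ℕ := i - ℓ with hkdef
      have hik : ℓ + k = i := by omega
      have hicast : ((ℓ + k : ℕ) : ℝ) = (i:ℝ) := by rw [hik]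
      -- strict upper bound
      have hmlt : m < x + (i:ℝ) := by
        rcases lt_or_eq_of_le h1 with h | h
        · exact h
        · exfalso
          apply hwb k
          rw [hbdef]
          have : w = (N:ℝ)/m := by
            field_simp [hw0.ne', (by linarith [hfm1, (Nat.cast_nonneg i : (0:ℝ) ≤ i)] : (0:ℝ) < m).ne'] at hm_eq ⊢
            linarith [hm_eq]
          rw [this]
          show (N:ℝ)/m = (N:ℝ)/(x + ((ℓ + k : ℕ) : ℝ))
          rw [hicast, ← h]
      have hwk : w ∈ Ioc (b k) (a k) := by
        rw [hIoc_iff k, hicast]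
        exact ⟨hfm1.le, hmlt⟩
      constructor
      · rw [hUdef]
        exact Set.mem_iUnion.mpr ⟨k, Set.mk_mem_prod hwk hzI⟩
      · -- not in V
        rw [hVdef]
        intro hV
        obtain ⟨hV1, hV2⟩ : w ∈ Ioc (b 0) (a 0) ∧ z ∈ Icc (0:ℝ) θ := hV
        rcases Nat.eq_zero_or_pos k with hk0 | hkpos
        · -- k = 0 : then z > θ is forced
          have hiℓ : (i:ℝ) = (ℓ:ℝ) := by
            rw [← hicast, hk0]; norm_num
          rw [hNyeq, hiℓ] at h2
          have : θ ≤ z := by linarith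
          have : θ < z := lt_of_le_of_ne this (Ne.symm hzθ)
          exact absurd hV2.2 (not_le.mpr this)
        · -- k ≥ 1 : w cannot be in the 0-th interval
          obtain ⟨hV1l, hV1r⟩ := (hIoc_iff 0).mp hV1
          have h10 : ((ℓ + 0 : ℕ) : ℝ) = (ℓ:ℝ) := by norm_num
          rw [h10] at hV1r
          have : (ℓ:ℝ) + 1 ≤ (i:ℝ) := by
            have : ℓ + 1 ≤ i := by omega
            exact_mod_cast this
          linarith
    · -- backward
      rintro ⟨hU', hV'⟩
      rw [hUdef] at hU'
      obtain ⟨k, hk⟩ := Set.mem_iUnion.mp hU'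
      have hwk : w ∈ Ioc (b k) (a k) := hk.1
      obtain ⟨hk1, hk2⟩ := (hIoc_iff k).mp hwk
      have hieq : i = ℓ + k := hfloor_of k hk1 hk2
      have hicast : ((ℓ + k : ℕ) : ℝ) = (i:ℝ) := by rw [hieq]
      rw [hpre_iff]
      refine ⟨by rw [← hicast]; linarith, ?_⟩
      rcases Nat.eq_zero_or_pos k with hk0 | hkpos
      · -- k = 0 : from q ∉ V we get θ < z
        have hw0' : w ∈ Ioc (b 0) (a 0) := by rw [← hk0] at *; exact hwk
        have hzθ' : z ∉ Icc (0:ℝ) θ := by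
          intro hzmem
          exact hV' (Set.mk_mem_prod hw0' hzmem)
        have : θ < z := by
          by_contra hcon
          push_neg at hcon
          exact hzθ' ⟨hzI.1, hcon⟩
        have hiℓ : (i:ℝ) = (ℓ:ℝ) := by
          rw [hieq, hk0]; norm_num
        rw [hNyeq, hiℓ]
        linarith
      · have : (ℓ:ℝ) + 1 ≤ (i:ℝ) := by
          have : ℓ + 1 ≤ i := by omega
          exact_mod_cast this
        rw [hNyeq]
        linarith [hzI.1]
  -- the null set
  have hNull : μ ({q : ℝ × ℝ | ¬ Irrational q.1} ∪ ({q : ℝ × ℝ | q.2 = θ} ∪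
      ({q : ℝ × ℝ | q.2 = 1} ∪ ((⋃ k : ℕ, {q : ℝ × ℝ | q.1 = b k}) ∪
        (Icc (0:ℝ) 1 ×ˢ Icc (0:ℝ) 1)ᶜ)))) = 0 := by
    refine measure_union_null (TwoDimAux.mu_null_not_irr hN n) ?_
    refine measure_union_null (TwoDimAux.mu_null_snd hN n θ) ?_
    refine measure_union_null (TwoDimAux.mu_null_snd hN n 1) ?_
    refine measure_union_null ?_ (TwoDimAux.mu_null_I2c hN n)
    exact measure_iUnion_null (fun k => TwoDimAux.mu_null_fst hN n (b k))
  -- a.e. identification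
  have hmain : μ (TNbar N ⁻¹' Bxy) = μ (U \ V) := by
    apply measure_congr
    rw [MeasureTheory.ae_eq_set]
    constructor
    · refine measure_mono_null ?_ hNull
      rintro ⟨w, z⟩ ⟨h1, h2⟩
      by_contra hq
      simp only [Set.mem_union, Set.mem_setOf_eq, Set.mem_iUnion, Set.mem_compl_iff,
        not_or, not_exists] at hq
      obtain ⟨hirr, hzθ, hz1, hwb, hI2⟩ := hq
      rw [not_not] at hirr hI2
      exact h2 ((hpoint w z hirr hI2 hzθ hz1 hwb).mp h1)
    · refine measure_mono_null ?_ hNull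
      rintro ⟨w, z⟩ ⟨h1, h2⟩
      by_contra hq
      simp only [Set.mem_union, Set.mem_setOf_eq, Set.mem_iUnion, Set.mem_compl_iff,
        not_or, not_exists] at hq
      obtain ⟨hirr, hzθ, hz1, hwb, hI2⟩ := hq
      rw [not_not] at hirr hI2
      exact h2 ((hpoint w z hirr hI2 hzθ hz1 hwb).mpr h1)
  -- disjointness
  have hdisjIoc : ∀ j k : ℕ, j ≠ k → Disjoint (Ioc (b j) (a j)) (Ioc (b k) (a k)) := by
    intro j k hjk
    rw [Set.Ioc_disjoint_Ioc]
    rcases lt_or_gt_of_ne hjk with h | h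
    · exact le_trans (min_le_right _ _) (le_trans (ha_le_b j k h) (le_max_left _ _))
    · exact le_trans (min_le_left _ _) (le_trans (ha_le_b k j h) (le_max_right _ _))
  have hprod_disj : ∀ {s t : Set ℝ}, Disjoint s t → ∀ (r r' : Set ℝ),
      Disjoint (s ×ˢ r) (t ×ˢ r') := by
    intro s t h r r'
    rw [Set.disjoint_left] at h ⊢
    rintro ⟨u, v⟩ ⟨hu, _⟩ ⟨hu', _⟩
    exact h hu hu'
  have hPdisj : Pairwise (Function.onFun Disjoint P) := by
    intro j k hjk
    exact hprod_disj (hdisjIoc j k hjk) _ _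
  have hU_meas_eq : μ U = ∑' k, μ (P k) := by
    rw [hUdef]; exact measure_iUnion hPdisj hPmeas
  have hVsubU : V ⊆ U := by
    rintro ⟨u, v⟩ ⟨h1, h2⟩
    rw [hUdef]
    exact Set.mem_iUnion.mpr ⟨0, Set.mk_mem_prod h1 ⟨h2.1, le_trans h2.2 hθ1.le⟩⟩
  have hdiff : μ (U \ V) = μ U - μ V :=
    measure_diff hVsubU hVmeas.nullMeasurableSet (TwoDimAux.muMap_fin N n V)
  -- term identities
  have hfin : ∀ E : Set (ℝ × ℝ), μ E ≠ ⊤ := TwoDimAux.muMap_fin N n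
  have hterm : ∀ (k : ℕ) (c : ℝ), 0 ≤ c →
      Ftwo N n (a k) c - Ftwo N n (b k) c =
        (μ (Ioc (b k) (a k) ×ˢ Icc (0:ℝ) c)).toReal := by
    intro k c hc
    rw [TwoDimAux.Ftwo_eq, TwoDimAux.Ftwo_eq]
    have hsplit : Icc (0:ℝ) (a k) ×ˢ Icc (0:ℝ) c =
        (Icc (0:ℝ) (b k) ×ˢ Icc (0:ℝ) c) ∪ (Ioc (b k) (a k) ×ˢ Icc (0:ℝ) c) := by
      rw [← Set.union_prod, Set.Icc_union_Ioc_eq_Icc (hb0 k) (hb_le_a k)]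
    have hdisj2 : Disjoint (Icc (0:ℝ) (b k) ×ˢ Icc (0:ℝ) c)
        (Ioc (b k) (a k) ×ˢ Icc (0:ℝ) c) := by
      apply hprod_disj
      rw [Set.disjoint_left]
      intro t ht ht'
      exact absurd ht.2 (not_le.mpr ht'.1)
    rw [hμdef, hsplit, measure_union hdisj2 (measurableSet_Ioc.prod measurableSet_Icc),
      ENNReal.toReal_add (hfin _) (hfin _)]
    ring
  -- assemble
  rw [hlhs, hmain, hdiff,
    ENNReal.toReal_sub_of_le (measure_mono hVsubU) (hfin U),
    hU_meas_eq, ENNReal.tsum_toReal_eq (fun k => hfin (P k))]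
  congr 1
  · apply tsum_congr
    intro k
    exact ((hterm k 1 zero_le_one).symm : _)
  · exact ((hterm 0 θ hθ0).symm : _)
end
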